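/- arXiv:1205.6657 — 7 statements merged into one kernel-verified Lean document; each statement's English description precedes it below -/
import Mathlib

section
/- Let a < b be real numbers and let f : [a,b] → ℝ be four times continuously differentiable on (a,b) with ‖f⁗‖_∞ = sup_{x∈(a,b)} |f⁗(x)| < ∞. Then |(1/3)[(f(a)+f(b))/2 + 2 f((a+b)/2)] − (1/(b−a)) ∫_a^b f(x) dx| ≤ (1/2880) ‖f⁗‖_∞ (b−a)⁴. -/
open Set Filter MeasureTheory intervalIntegral

/-- **Classical Simpson inequality.** If `f` is four times continuously
differentiable on `(a, b)` (and continuous on `[a, b]`) with the fourth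
derivative bounded in absolute value by `M` on `(a, b)`, then the Simpson
quadrature error against the mean value of `f` is at most
`(1/2880) * M * (b - a)^4`. -/
theorem simpson_inequality (a b : ℝ) (hab : a < b) (f : ℝ → ℝ)
    (hcont : ContinuousOn f (Set.Icc a b))
    (hf : ContDiffOn ℝ 4 f (Set.Ioo a b))
    (M : ℝ)
    (hM : ∀ x ∈ Set.Ioo a b, |iteratedDerivWithin 4 f (Set.Ioo a b) x| ≤ M) :
    |(1 / 3) * ((f a + f b) / 2 + 2 * f ((a + b) / 2)) -
        (1 / (b - a)) * ∫ x in a..b, f x| ≤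
      (1 / 2880) * M * (b - a) ^ 4 := by
  set s : Set ℝ := Set.Ioo a b with hs_def
  have hs : IsOpen s := isOpen_Ioo
  set m : ℝ := (a + b) / 2 with hm_def
  set h : ℝ := (b - a) / 2 with hh_def
  have h0 : 0 < h := by rw [hh_def]; linarith
  have ham : a < m := by rw [hm_def]; linarith
  have hmb : m < b := by rw [hm_def]; linarith
  have hms : m ∈ s := ⟨ham, hmb⟩
  have hba0 : (0:ℝ) < b - a := by linarith
  -- the successive derivatives
  set F1 : ℝ → ℝ := deriv f with hF1
  set F2 : ℝ → ℝ := deriv F1 with hF2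
  set F3 : ℝ → ℝ := deriv F2 with hF3
  set F4 : ℝ → ℝ := deriv F3 with hF4
  have hc1 : ContDiffOn ℝ 3 F1 s := hf.deriv_of_isOpen hs (by norm_num)
  have hc2 : ContDiffOn ℝ 2 F2 s := hc1.deriv_of_isOpen hs (by norm_num)
  have hc3 : ContDiffOn ℝ 1 F3 s := hc2.deriv_of_isOpen hs (by norm_num)
  have hdiff : ∀ (G : ℝ → ℝ) (n : WithTop ℕ∞), ContDiffOn ℝ n G s → 1 ≤ n →
      ∀ x ∈ s, HasDerivAt G (deriv G x) x := by
    intro G n hG hn x hx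
    exact (((hG.differentiableOn (lt_of_lt_of_le zero_lt_one hn).ne') x hx).differentiableAt (hs.mem_nhds hx)).hasDerivAt
  have hd0 : ∀ x ∈ s, HasDerivAt f (F1 x) x := hdiff f 4 hf (by norm_num)
  have hd1 : ∀ x ∈ s, HasDerivAt F1 (F2 x) x := hdiff F1 3 hc1 (by norm_num)
  have hd2 : ∀ x ∈ s, HasDerivAt F2 (F3 x) x := hdiff F2 2 hc2 (by norm_num)
  have hd3 : ∀ x ∈ s, HasDerivAt F3 (F4 x) x := hdiff F3 1 hc3 le_rfl
  -- identify the fourth iterated derivative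
  have e4 : ∀ x ∈ s, iteratedDerivWithin 4 f s x = F4 x := by
    intro x hx
    have h1 : iteratedDerivWithin 4 f s x = iteratedDeriv 4 f x := by
      rw [iteratedDerivWithin_eq_iteratedFDerivWithin, iteratedDeriv_eq_iteratedFDeriv,
        iteratedFDerivWithin_of_isOpen 4 hs hx]
    rw [h1, show (4:ℕ) = 3+1 from rfl, iteratedDeriv_succ,
      show (3:ℕ) = 2+1 from rfl, iteratedDeriv_succ,
      show (2:ℕ) = 1+1 from rfl, iteratedDeriv_succ, iteratedDeriv_one]
  have hM' : ∀ x ∈ s, |F4 x| ≤ M := fun x hx => (e4 x hx) ▸ hM x hx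
  have hM0 : 0 ≤ M := (abs_nonneg _).trans (hM' m hms)
  -- mean value estimate for F3
  have hMVT : ∀ x ∈ s, ∀ y ∈ s, |F3 y - F3 x| ≤ M * |y - x| := by
    intro x hx y hy
    have := Convex.norm_image_sub_le_of_norm_hasDerivWithin_le
      (fun z hz => (hd3 z hz).hasDerivWithinAt)
      (fun z hz => by simpa [Real.norm_eq_abs] using hM' z hz) (convex_Ioo a b) hx hy
    simpa [Real.norm_eq_abs] using this
  -- the primitive
  have hint : ∀ u ∈ Set.Icc a b, ∀ v ∈ Set.Icc a b, IntervalIntegrable f volume u v := by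
    intro u hu v hv
    exact (hcont.mono (Set.uIcc_subset_Icc hu hv)).intervalIntegrable
  set I : ℝ → ℝ := fun u => ∫ x in m..u, f x with hI
  have hmIcc : m ∈ Set.Icc a b := ⟨ham.le, hmb.le⟩
  have haIcc : a ∈ Set.Icc a b := ⟨le_rfl, hab.le⟩
  have hbIcc : b ∈ Set.Icc a b := ⟨hab.le, le_rfl⟩
  have hIcont : ContinuousOn I (Set.Icc a b) := by
    have := intervalIntegral.continuousOn_primitive_interval' (μ := volume)
      (hint a haIcc b hbIcc) (by rw [Set.uIcc_of_le hab.le]; exact hmIcc)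
    rw [Set.uIcc_of_le hab.le] at this
    exact this
  have hIderiv : ∀ u ∈ s, HasDerivAt I (f u) u := by
    intro u hu
    exact intervalIntegral.integral_hasDerivAt_right
      (hint m hmIcc u ⟨hu.1.le, hu.2.le⟩)
      (ContinuousOn.stronglyMeasurableAtFilter hs hf.continuousOn u hu)
      (hcont.continuousAt (Icc_mem_nhds hu.1 hu.2))
  -- auxiliary functions
  set g : ℝ → ℝ := fun t => I (m + t) - I (m - t)
      - t / 3 * (f (m - t) + 4 * f m + f (m + t)) with hg
  set g1 : ℝ → ℝ := fun t => 2/3 * (f (m + t) + f (m - t)) - 4/3 * f m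
      - t / 3 * (F1 (m + t) - F1 (m - t)) with hg1
  set g2 : ℝ → ℝ := fun t => 1/3 * (F1 (m + t) - F1 (m - t))
      - t / 3 * (F2 (m + t) + F2 (m - t)) with hg2
  set g3 : ℝ → ℝ := fun t => -(t / 3) * (F3 (m + t) - F3 (m - t)) with hg3
  -- composition derivatives
  have hcomp : ∀ (G G' : ℝ → ℝ), (∀ x ∈ s, HasDerivAt G (G' x) x) → ∀ t : ℝ,
      m + t ∈ s → m - t ∈ s →
      HasDerivAt (fun t => G (m + t)) (G' (m + t)) t ∧
        HasDerivAt (fun t => G (m - t)) (-G' (m - t)) t := by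
    intro G G' hG t h1 h2
    constructor
    · have := (hG _ h1).comp t ((hasDerivAt_id t).const_add m)
      exact (hG _ h1).comp_const_add m t
    · have := (hG _ h2).comp t ((hasDerivAt_id t).const_sub m)
      exact (hG _ h2).comp_const_sub m t
  have hmem : ∀ t : ℝ, 0 ≤ t → t < h → m + t ∈ s ∧ m - t ∈ s := by
    intro t ht0 hth
    constructor
    · exact ⟨by linarith, by rw [hm_def]; rw [hh_def] at hth; linarith⟩
    · exact ⟨by rw [hm_def]; rw [hh_def] at hth; linarith, by linarith⟩
  -- derivatives of g, g1, g2
  have hgd : ∀ t : ℝ, 0 ≤ t → t < h → HasDerivAt g (g1 t) t := by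
    intro t ht0 hth
    obtain ⟨hp, hq⟩ := hmem t ht0 hth
    obtain ⟨hA, hB⟩ := hcomp I f hIderiv t hp hq
    obtain ⟨hC, hD⟩ := hcomp f F1 hd0 t hp hq
    have hprod : HasDerivAt (fun t => t / 3 * (f (m - t) + 4 * f m + f (m + t)))
        (1/3 * (f (m - t) + 4 * f m + f (m + t)) + t/3 * ((-F1 (m - t) + 0) + F1 (m + t))) t := by
      have := (((hasDerivAt_id t).div_const 3).mul
        ((hD.add (hasDerivAt_const t (4 * f m))).add hC))
      exact this
    have := (hA.sub hB).sub hprod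
    refine this.congr_deriv ?_
    rw [hg1]
    ring
  have hg1d : ∀ t : ℝ, 0 ≤ t → t < h → HasDerivAt g1 (g2 t) t := by
    intro t ht0 hth
    obtain ⟨hp, hq⟩ := hmem t ht0 hth
    obtain ⟨hC, hD⟩ := hcomp f F1 hd0 t hp hq
    obtain ⟨hE, hF⟩ := hcomp F1 F2 hd1 t hp hq
    have hprod : HasDerivAt (fun t => t / 3 * (F1 (m + t) - F1 (m - t)))
        (1/3 * (F1 (m + t) - F1 (m - t)) + t/3 * (F2 (m + t) - (-F2 (m - t)))) t := by
      have := ((hasDerivAt_id t).div_const 3).mul (hE.sub hF)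
      exact this
    have := (((hC.add hD).const_mul (2/3 : ℝ)).sub (hasDerivAt_const t (4/3 * f m))).sub hprod
    refine this.congr_deriv ?_
    rw [hg2]
    ring
  have hg2d : ∀ t : ℝ, 0 ≤ t → t < h → HasDerivAt g2 (g3 t) t := by
    intro t ht0 hth
    obtain ⟨hp, hq⟩ := hmem t ht0 hth
    obtain ⟨hE, hF⟩ := hcomp F1 F2 hd1 t hp hq
    obtain ⟨hG', hH⟩ := hcomp F2 F3 hd2 t hp hq
    have hprod : HasDerivAt (fun t => t / 3 * (F2 (m + t) + F2 (m - t)))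
        (1/3 * (F2 (m + t) + F2 (m - t)) + t/3 * (F3 (m + t) + -F3 (m - t))) t := by
      have := ((hasDerivAt_id t).div_const 3).mul (hG'.add hH)
      exact this
    have := ((hE.sub hF).const_mul (1/3 : ℝ)).sub hprod
    refine this.congr_deriv ?_
    rw [hg3]
    ring
  -- bound on g3
  have hbound3 : ∀ t : ℝ, 0 ≤ t → t < h → |g3 t| ≤ 2/3 * M * t^2 := by
    intro t ht0 hth
    obtain ⟨hp, hq⟩ := hmem t ht0 hth
    have h1 : |g3 t| = t/3 * |F3 (m + t) - F3 (m - t)| := by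
      rw [hg3]
      simp only [abs_mul, abs_neg, abs_of_nonneg (by linarith : (0:ℝ) ≤ t / 3)]
    have h2 : |F3 (m + t) - F3 (m - t)| ≤ M * (2 * t) := by
      have := hMVT (m - t) hq (m + t) hp
      have he : |(m + t) - (m - t)| = 2 * t := by
        rw [abs_of_nonneg (by linarith)]; ring
      rw [he] at this
      linarith
    rw [h1]
    nlinarith
  -- iterate the fencing lemma
  have key : ∀ T : ℝ, 0 ≤ T → T < h → |g T| ≤ M/90 * T^5 := by
    intro T hT0 hTh
    have hlt : ∀ x ∈ Set.Icc (0:ℝ) T, 0 ≤ x ∧ x < h :=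
      fun x hx => ⟨hx.1, lt_of_le_of_lt hx.2 hTh⟩
    have hlt' : ∀ x ∈ Set.Ico (0:ℝ) T, 0 ≤ x ∧ x < h :=
      fun x hx => ⟨hx.1, lt_trans hx.2 hTh⟩
    -- bound on g2
    have hBd2 : ∀ x ∈ Set.Icc (0:ℝ) T, |g2 x| ≤ 2/9 * M * x^3 := by
      have := image_norm_le_of_norm_deriv_right_le_deriv_boundary
        (f := g2) (f' := g3) (B := fun x => 2/9 * M * x^3) (B' := fun x => 2/3 * M * x^2)
        (fun x hx => (hg2d x (hlt x hx).1 (hlt x hx).2).continuousAt.continuousWithinAt)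
        (fun x hx => (hg2d x (hlt' x hx).1 (hlt' x hx).2).hasDerivWithinAt)
        (by
          have : g2 0 = 0 := by rw [hg2]; simp
          rw [Real.norm_eq_abs, this]; norm_num)
        (fun x => by
          have := (hasDerivAt_pow 3 x).const_mul (2/9 * M)
          refine this.congr_deriv ?_
          push_cast
          ring)
        (fun x hx => by
          rw [Real.norm_eq_abs]
          exact hbound3 x (hlt' x hx).1 (hlt' x hx).2)
      intro x hx
      have := this hx
      rwa [Real.norm_eq_abs] at this
    -- bound on g1
    have hBd1 : ∀ x ∈ Set.Icc (0:ℝ) T, |g1 x| ≤ M/18 * x^4 := by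
      have := image_norm_le_of_norm_deriv_right_le_deriv_boundary
        (f := g1) (f' := g2) (B := fun x => M/18 * x^4) (B' := fun x => 2/9 * M * x^3)
        (fun x hx => (hg1d x (hlt x hx).1 (hlt x hx).2).continuousAt.continuousWithinAt)
        (fun x hx => (hg1d x (hlt' x hx).1 (hlt' x hx).2).hasDerivWithinAt)
        (by
          have : g1 0 = 0 := by rw [hg1]; simp; ring
          rw [Real.norm_eq_abs, this]; norm_num)
        (fun x => by
          have := (hasDerivAt_pow 4 x).const_mul (M/18)
          refine this.congr_deriv ?_
          push_cast
          ring)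
        (fun x hx => by
          rw [Real.norm_eq_abs]
          exact hBd2 x (Set.Ico_subset_Icc_self hx))
      intro x hx
      have := this hx
      rwa [Real.norm_eq_abs] at this
    -- bound on g
    have hBd0 : ∀ x ∈ Set.Icc (0:ℝ) T, |g x| ≤ M/90 * x^5 := by
      have := image_norm_le_of_norm_deriv_right_le_deriv_boundary
        (f := g) (f' := g1) (B := fun x => M/90 * x^5) (B' := fun x => M/18 * x^4)
        (fun x hx => (hgd x (hlt x hx).1 (hlt x hx).2).continuousAt.continuousWithinAt)
        (fun x hx => (hgd x (hlt' x hx).1 (hlt' x hx).2).hasDerivWithinAt)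
        (by
          have : g 0 = 0 := by rw [hg]; simp
          rw [Real.norm_eq_abs, this]; norm_num)
        (fun x => by
          have := (hasDerivAt_pow 5 x).const_mul (M/90)
          refine this.congr_deriv ?_
          push_cast
          ring)
        (fun x hx => by
          rw [Real.norm_eq_abs]
          exact hBd1 x (Set.Ico_subset_Icc_self hx))
      intro x hx
      have := this hx
      rwa [Real.norm_eq_abs] at this
    exact hBd0 T ⟨hT0, le_rfl⟩
  -- continuity of g on [0, h] and passage to the limit
  have hmapsP : ∀ t ∈ Set.Icc (0:ℝ) h, m + t ∈ Set.Icc a b := by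
    intro t ht
    rw [hm_def]; rw [hh_def] at ht
    exact ⟨by linarith [ht.1], by linarith [ht.2]⟩
  have hmapsQ : ∀ t ∈ Set.Icc (0:ℝ) h, m - t ∈ Set.Icc a b := by
    intro t ht
    rw [hm_def]; rw [hh_def] at ht
    exact ⟨by linarith [ht.2], by linarith [ht.1]⟩
  have hgc : ContinuousOn g (Set.Icc 0 h) := by
    rw [hg]
    have c1 : ContinuousOn (fun t : ℝ => I (m + t)) (Set.Icc 0 h) :=
      hIcont.comp (continuous_const.add continuous_id).continuousOn hmapsP
    have c2 : ContinuousOn (fun t : ℝ => I (m - t)) (Set.Icc 0 h) :=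
      hIcont.comp (continuous_const.sub continuous_id).continuousOn hmapsQ
    have c3 : ContinuousOn (fun t : ℝ => f (m - t)) (Set.Icc 0 h) :=
      hcont.comp (continuous_const.sub continuous_id).continuousOn hmapsQ
    have c4 : ContinuousOn (fun t : ℝ => f (m + t)) (Set.Icc 0 h) :=
      hcont.comp (continuous_const.add continuous_id).continuousOn hmapsP
    exact (c1.sub c2).sub (((continuous_id.div_const 3).continuousOn).mul
      ((c3.add continuousOn_const).add c4))
  have hghle : |g h| ≤ M/90 * h^5 := by
    have hne : (nhdsWithin h (Set.Ico 0 h)).NeBot := by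
      refine mem_closure_iff_nhdsWithin_neBot.1 ?_
      rw [closure_Ico (ne_of_lt h0)]
      exact ⟨h0.le, le_rfl⟩
    have t1 : Tendsto (fun t => |g t|) (nhdsWithin h (Set.Ico 0 h)) (nhds |g h|) := by
      have : Tendsto g (nhdsWithin h (Set.Ico 0 h)) (nhds (g h)) :=
        ((hgc h ⟨h0.le, le_rfl⟩).mono Set.Ico_subset_Icc_self)
      exact (continuous_abs.tendsto _).comp this
    have t2 : Tendsto (fun t => M/90 * t^5) (nhdsWithin h (Set.Ico 0 h))
        (nhds (M/90 * h^5)) := by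
      exact ((continuous_const.mul (continuous_pow 5)).tendsto h).mono_left nhdsWithin_le_nhds
    refine le_of_tendsto_of_tendsto t1 t2 ?_
    filter_upwards [self_mem_nhdsWithin] with x hx
    exact key x hx.1 hx.2
  -- identify g h with the Simpson error
  have e1 : m + h = b := by rw [hm_def, hh_def]; ring
  have e2 : m - h = a := by rw [hm_def, hh_def]; ring
  have hgh : g h = (∫ x in a..b, f x) - h/3 * (f a + 4 * f m + f b) := by
    rw [hg]
    simp only
    rw [e1, e2, hI]
    simp only
    rw [intervalIntegral.integral_interval_sub_left (hint m hmIcc b hbIcc) (hint m hmIcc a haIcc)]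
  have key2 : (1 / 3) * ((f a + f b) / 2 + 2 * f m) -
      (1 / (b - a)) * ∫ x in a..b, f x = -(1/(b-a)) * g h := by
    rw [hgh, hh_def]
    field_simp
    ring
  rw [key2, abs_mul, abs_neg, abs_of_pos (by positivity : (0:ℝ) < 1/(b-a))]
  calc 1/(b-a) * |g h| ≤ 1/(b-a) * (M/90 * h^5) := by
        exact mul_le_mul_of_nonneg_left hghle (by positivity)
    _ = 1/2880 * M * (b-a)^4 := by
        rw [hh_def]
        field_simp
        ring
end

section
/- Let f : I ⊆ ℝ → ℝ be an absolutely continuous mapping on the interior of I, and let a, b ∈ I with a < b. Then (1/6)[f(a) + 4 f((a+b)/2) + f(b)] − (1/(b−a)) ∫_a^b f(x) dx = (b−a) ∫_0^1 p(t) f′(t b + (1−t) a) dt, where p(t) = t − 1/6 for t ∈ [0, 1/2) and p(t) = t − 5/6 for t ∈ [1/2, 1]. -/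
open MeasureTheory Set intervalIntegral

/-- Fubini: integral of an indefinite integral. -/
lemma simpson_fubini_aux (a b : ℝ) (hab : a ≤ b) (g : ℝ → ℝ)
    (hg : IntervalIntegrable g volume a b) :
    ∫ x in a..b, (∫ t in a..x, g t) = ∫ t in a..b, (b - t) * g t := by
  have hg' : IntegrableOn g (Ioc a b) := hg.1
  set μ := volume.restrict (Ioc a b) with hμdef
  have hfin : IsFiniteMeasure μ := by
    constructor
    rw [hμdef, Measure.restrict_apply_univ]
    exact measure_Ioc_lt_top
  have hS : MeasurableSet {p : ℝ × ℝ | p.2 ∈ Ioc a p.1} := by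
    have h1 : MeasurableSet {p : ℝ × ℝ | a < p.2} :=
      measurableSet_lt measurable_const measurable_snd
    have h2 : MeasurableSet {p : ℝ × ℝ | p.2 ≤ p.1} :=
      measurableSet_le measurable_snd measurable_fst
    exact h1.inter h2
  have hint : Integrable (fun p : ℝ × ℝ => (Ioc a p.1).indicator g p.2) (μ.prod μ) := by
    have h0 : Integrable (fun p : ℝ × ℝ => (1 : ℝ) * g p.2) (μ.prod μ) :=
      (integrable_const (1 : ℝ)).mul_prod hg'
    simp only [one_mul] at h0
    have := h0.indicator hS
    refine this.congr ?_
    filter_upwards with p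
    simp [Set.indicator_apply]
  have swap := integral_integral_swap (f := fun x t => (Ioc a x).indicator g t) hint
  have hL : ∫ x in a..b, (∫ t in a..x, g t) =
      ∫ x, (∫ t, (Ioc a x).indicator g t ∂μ) ∂μ := by
    rw [integral_of_le hab]
    apply setIntegral_congr_fun measurableSet_Ioc
    intro x hx
    show (∫ t in a..x, g t) = ∫ t, (Ioc a x).indicator g t ∂μ
    rw [integral_of_le hx.1.le, hμdef, setIntegral_indicator measurableSet_Ioc,
      Set.inter_eq_self_of_subset_right (Ioc_subset_Ioc le_rfl hx.2)]
  have hR : ∫ t, (∫ x, (Ioc a x).indicator g t ∂μ) ∂μ = ∫ t in a..b, (b - t) * g t := by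
    rw [integral_of_le hab, hμdef]
    apply setIntegral_congr_fun measurableSet_Ioc
    intro t ht
    have heq : (fun x => (Ioc a x).indicator g t) = (Ici t).indicator (fun _ => g t) := by
      funext x
      simp only [Set.indicator_apply, Set.mem_Ioc, Set.mem_Ici]
      by_cases h : t ≤ x
      · simp [h, ht.1]
      · simp [h]
    show (∫ x in Ioc a b, (Ioc a x).indicator g t) = (b - t) * g t
    rw [heq, setIntegral_indicator measurableSet_Ici]
    have hset : Ioc a b ∩ Ici t = Icc t b := by
      ext x
      simp only [Set.mem_inter_iff, Set.mem_Ioc, Set.mem_Ici, Set.mem_Icc]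
      constructor
      · rintro ⟨⟨_, hx2⟩, hx3⟩; exact ⟨hx3, hx2⟩
      · rintro ⟨hx1, hx2⟩; exact ⟨⟨lt_of_lt_of_le ht.1 hx1, hx2⟩, hx1⟩
    rw [hset, setIntegral_const, Real.volume_real_Icc, max_eq_left (by linarith [ht.2])]
    simp [smul_eq_mul]
  rw [hL, swap, hR]

/-- **Simpson kernel identity (Alomari et al.).** If `f` is absolutely
continuous on the interior of `I` (expressed by saying that `f` is the
indefinite integral of an integrable function `f'` on `[a, b] ⊆ interior I`),
then the Simpson quadrature error equals
`(b - a) * ∫ t in 0..1, p t * f' (t * b + (1 - t) * a)` where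
`p t = t - 1/6` on `[0, 1/2)` and `p t = t - 5/6` on `[1/2, 1]`. -/
theorem simpson_kernel_identity (I : Set ℝ) (a b : ℝ) (ha : a ∈ I) (hb : b ∈ I)
    (hab : a < b) (hIab : Set.Icc a b ⊆ interior I)
    (f f' : ℝ → ℝ)
    (hint : IntervalIntegrable f' MeasureTheory.volume a b)
    (hAC : ∀ x ∈ Set.Icc a b, f x = f a + ∫ t in a..x, f' t) :
    (1 / 6) * (f a + 4 * f ((a + b) / 2) + f b) -
        (1 / (b - a)) * ∫ x in a..b, f x =
      (b - a) *
        ∫ t in (0 : ℝ)..1,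
          (if t < 1 / 2 then t - 1 / 6 else t - 5 / 6) * f' (t * b + (1 - t) * a) := by
  have hba : (0:ℝ) < b - a := sub_pos.2 hab
  have hba' : b - a ≠ 0 := ne_of_gt hba
  set m : ℝ := (a + b) / 2 with hmdef
  have ham : a ≤ m := by rw [hmdef]; linarith
  have hmb : m ≤ b := by rw [hmdef]; linarith
  -- sub-interval integrability of f'
  have hint1 : IntervalIntegrable f' volume a m :=
    hint.mono_set (by rw [uIcc_of_le ham, uIcc_of_le hab.le]; exact Icc_subset_Icc le_rfl hmb)
  have hint2 : IntervalIntegrable f' volume m b :=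
    hint.mono_set (by rw [uIcc_of_le hmb, uIcc_of_le hab.le]; exact Icc_subset_Icc ham le_rfl)
  set A := ∫ x in a..m, f' x with hAdef
  set B := ∫ x in m..b, f' x with hBdef
  have hAB : ∫ x in a..b, f' x = A + B := (integral_add_adjacent_intervals hint1 hint2).symm
  have hfb : f b = f a + (A + B) := by
    rw [hAC b ⟨hab.le, le_rfl⟩, hAB]
  have hfm : f m = f a + A := by rw [hAC m ⟨ham, hmb⟩]
  -- ∫ f = (b-a) f a + C where C = ∫ (b-x) f'
  have hCint : IntervalIntegrable (fun x => (b - x) * f' x) volume a b :=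
    hint.continuousOn_mul (by fun_prop)
  set C := ∫ x in a..b, (b - x) * f' x with hCdef
  have hIf : ∫ x in a..b, f x = (b - a) * f a + C := by
    have h1 : ∫ x in a..b, f x = ∫ x in a..b, (f a + ∫ t in a..x, f' t) := by
      apply integral_congr
      intro x hx
      rw [uIcc_of_le hab.le] at hx
      exact hAC x hx
    have hIoc : IntegrableOn f' (uIcc a b) volume := by
      rw [uIcc_of_le hab.le]
      exact (intervalIntegrable_iff_integrableOn_Icc_of_le hab.le).mp hint
    have h2 : IntervalIntegrable (fun x => ∫ t in a..x, f' t) volume a b :=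
      (intervalIntegral.continuousOn_primitive_interval hIoc).intervalIntegrable
    rw [h1, integral_add (intervalIntegrable_const) h2, intervalIntegral.integral_const,
      simpson_fubini_aux a b hab.le f' hint, smul_eq_mul]
  -- substitution to the t-domain
  set g : ℝ → ℝ := fun t => f' ((b - a) * t + a) with hgdef
  have hgint : IntervalIntegrable g volume 0 1 := by
    have h1 := (hint.comp_add_left a).comp_mul_left (c := b - a)
    simp only [sub_self, zero_div, div_self hba'] at h1
    have heq : (fun x => f' (a + (b - a) * x)) = g := by
      funext t; simp only [hgdef]; ring_nf
    rwa [heq] at h1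
  have hg1 : IntervalIntegrable g volume 0 (1/2) :=
    hgint.mono_set (by
      rw [uIcc_of_le (by norm_num : (0:ℝ) ≤ 1/2), uIcc_of_le (by norm_num : (0:ℝ) ≤ 1)]
      exact Icc_subset_Icc le_rfl (by norm_num))
  have hg2 : IntervalIntegrable g volume (1/2) 1 :=
    hgint.mono_set (by
      rw [uIcc_of_le (by norm_num : (1/2:ℝ) ≤ 1), uIcc_of_le (by norm_num : (0:ℝ) ≤ 1)]
      exact Icc_subset_Icc (by norm_num) le_rfl)
  have htg1 : IntervalIntegrable (fun t => t * g t) volume 0 (1/2) :=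
    hg1.continuousOn_mul (by fun_prop)
  have htg2 : IntervalIntegrable (fun t => t * g t) volume (1/2) 1 :=
    hg2.continuousOn_mul (by fun_prop)
  set K : ℝ → ℝ :=
    fun t => (if t < 1/2 then t - 1/6 else t - 5/6) * f' (t * b + (1 - t) * a) with hKdef
  have hKg : ∀ t : ℝ, f' (t * b + (1 - t) * a) = g t := by
    intro t; rw [hgdef]; ring_nf
  have hae : ∀ᵐ t : ℝ ∂volume, t ≠ 1/2 := by
    have h0 : volume ({(1/2 : ℝ)} : Set ℝ) = 0 := Real.volume_singleton
    filter_upwards [measure_eq_zero_iff_ae_notMem.mp h0] with t ht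
    simpa using ht
  have hpiece1 : IntervalIntegrable (fun t => (t - 1/6) * g t) volume 0 (1/2) :=
    hg1.continuousOn_mul (by fun_prop)
  have hpiece2 : IntervalIntegrable (fun t => (t - 5/6) * g t) volume (1/2) 1 :=
    hg2.continuousOn_mul (by fun_prop)
  have hK1int : IntervalIntegrable K volume 0 (1/2) := by
    constructor
    · apply hpiece1.1.congr
      have h1 := ae_restrict_mem (μ := volume) (measurableSet_Ioc : MeasurableSet (Ioc (0:ℝ) (1/2)))
      have h2 : ∀ᵐ t ∂(volume.restrict (Ioc (0:ℝ) (1/2))), t ≠ 1/2 := ae_restrict_of_ae hae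
      filter_upwards [h1, h2] with t ht hne
      have hlt : t < 1/2 := lt_of_le_of_ne ht.2 hne
      simp only [hKdef, hKg t]; rw [if_pos hlt]
    · rw [Set.Ioc_eq_empty (by norm_num)]
      exact integrableOn_empty
  have hK2int : IntervalIntegrable K volume (1/2) 1 := by
    constructor
    · apply hpiece2.1.congr
      have h1 := ae_restrict_mem (μ := volume) (measurableSet_Ioc : MeasurableSet (Ioc (1/2:ℝ) 1))
      filter_upwards [h1] with t ht
      have hlt : ¬ t < 1/2 := not_lt.mpr ht.1.le
      simp only [hKdef, hKg t]; rw [if_neg hlt]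
    · rw [Set.Ioc_eq_empty (by norm_num)]
      exact integrableOn_empty
  have hKsplit : ∫ t in (0:ℝ)..1, K t = (∫ t in (0:ℝ)..(1/2), K t) + ∫ t in (1/2:ℝ)..1, K t :=
    (integral_add_adjacent_intervals hK1int hK2int).symm
  have hKp1 : ∫ t in (0:ℝ)..(1/2), K t =
      (∫ t in (0:ℝ)..(1/2), t * g t) - (1/6) * ∫ t in (0:ℝ)..(1/2), g t := by
    have h1 : ∫ t in (0:ℝ)..(1/2), K t = ∫ t in (0:ℝ)..(1/2), (t - 1/6) * g t := by
      apply intervalIntegral.integral_congr_ae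
      filter_upwards [hae] with t hne ht
      rw [uIoc_of_le (by norm_num : (0:ℝ) ≤ 1/2)] at ht
      have hlt : t < 1/2 := lt_of_le_of_ne ht.2 hne
      simp only [hKdef, hKg t]; rw [if_pos hlt]
    have h2 : ∫ t in (0:ℝ)..(1/2), (t - 1/6) * g t =
        ∫ t in (0:ℝ)..(1/2), (t * g t - (1/6) * g t) :=
      integral_congr (fun t _ => by ring)
    rw [h1, h2, integral_sub htg1 (hg1.const_mul _), intervalIntegral.integral_const_mul]
  have hKp2 : ∫ t in (1/2:ℝ)..1, K t =
      (∫ t in (1/2:ℝ)..1, t * g t) - (5/6) * ∫ t in (1/2:ℝ)..1, g t := by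
    have h1 : ∫ t in (1/2:ℝ)..1, K t = ∫ t in (1/2:ℝ)..1, (t - 5/6) * g t := by
      apply intervalIntegral.integral_congr_ae
      apply Filter.Eventually.of_forall
      intro t ht
      rw [uIoc_of_le (by norm_num : (1/2:ℝ) ≤ 1)] at ht
      have hlt : ¬ t < 1/2 := not_lt.mpr ht.1.le
      simp only [hKdef, hKg t]; rw [if_neg hlt]
    have h2 : ∫ t in (1/2:ℝ)..1, (t - 5/6) * g t =
        ∫ t in (1/2:ℝ)..1, (t * g t - (5/6) * g t) :=
      integral_congr (fun t _ => by ring)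
    rw [h1, h2, integral_sub htg2 (hg2.const_mul _), intervalIntegral.integral_const_mul]
  -- substitution facts
  have hsub1 : (b - a) * ∫ t in (0:ℝ)..(1/2), g t = A := by
    have h := intervalIntegral.smul_integral_comp_mul_add (a := (0:ℝ)) (b := 1/2)
      (f := f') (b - a) a
    rw [show (b-a) * 0 + a = a by ring, show (b-a) * (1/2) + a = m by rw [hmdef]; ring,
      smul_eq_mul] at h
    exact h
  have hsub2 : (b - a) * ∫ t in (1/2:ℝ)..1, g t = B := by
    have h := intervalIntegral.smul_integral_comp_mul_add (a := (1/2:ℝ)) (b := 1)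
      (f := f') (b - a) a
    rw [show (b-a) * (1/2) + a = m by rw [hmdef]; ring, show (b-a) * 1 + a = b by ring,
      smul_eq_mul] at h
    exact h
  set D₁ := ∫ x in a..m, (x - a) * f' x with hD₁def
  set D₂ := ∫ x in m..b, (x - a) * f' x with hD₂def
  have hsub3 : (b - a) * ((b - a) * ∫ t in (0:ℝ)..(1/2), t * g t) = D₁ := by
    have h := intervalIntegral.smul_integral_comp_mul_add (a := (0:ℝ)) (b := 1/2)
      (f := fun x => (x - a) * f' x) (b - a) a
    rw [show (b-a) * 0 + a = a by ring, show (b-a) * (1/2) + a = m by rw [hmdef]; ring,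
      smul_eq_mul] at h
    rw [hD₁def, ← h]
    rw [show (∫ t in (0:ℝ)..(1/2), ((b-a) * t + a - a) * f' ((b-a) * t + a)) =
      ∫ t in (0:ℝ)..(1/2), (b - a) * (t * g t) from integral_congr (fun t _ => by
        rw [hgdef]; ring), intervalIntegral.integral_const_mul]
  have hsub4 : (b - a) * ((b - a) * ∫ t in (1/2:ℝ)..1, t * g t) = D₂ := by
    have h := intervalIntegral.smul_integral_comp_mul_add (a := (1/2:ℝ)) (b := 1)
      (f := fun x => (x - a) * f' x) (b - a) a
    rw [show (b-a) * (1/2) + a = m by rw [hmdef]; ring, show (b-a) * 1 + a = b by ring,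
      smul_eq_mul] at h
    rw [hD₂def, ← h]
    rw [show (∫ t in (1/2:ℝ)..1, ((b-a) * t + a - a) * f' ((b-a) * t + a)) =
      ∫ t in (1/2:ℝ)..1, (b - a) * (t * g t) from integral_congr (fun t _ => by
        rw [hgdef]; ring), intervalIntegral.integral_const_mul]
  -- relation between D₁ + D₂ and C
  have hDint1 : IntervalIntegrable (fun x => (x - a) * f' x) volume a m :=
    hint1.continuousOn_mul (by fun_prop)
  have hDint2 : IntervalIntegrable (fun x => (x - a) * f' x) volume m b :=
    hint2.continuousOn_mul (by fun_prop)
  have hDsum : D₁ + D₂ = ∫ x in a..b, (x - a) * f' x :=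
    integral_add_adjacent_intervals hDint1 hDint2
  have hDC : ∫ x in a..b, (x - a) * f' x = (b - a) * (A + B) - C := by
    have h1 : ∫ x in a..b, (x - a) * f' x =
        ∫ x in a..b, ((b - a) * f' x - (b - x) * f' x) :=
      integral_congr (fun x _ => by ring)
    rw [h1, integral_sub (hint.const_mul _) hCint, intervalIntegral.integral_const_mul, hAB, hCdef]
  have hC' : C = (b - a) * (A + B) - (D₁ + D₂) := by
    rw [hDsum, hDC]; ring
  -- solve for the t-domain integrals
  have eY1 : ∫ t in (0:ℝ)..(1/2), g t = A / (b - a) :=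
    (eq_div_iff hba').mpr (by linarith [hsub1])
  have eY2 : ∫ t in (1/2:ℝ)..1, g t = B / (b - a) :=
    (eq_div_iff hba').mpr (by linarith [hsub2])
  have eX1 : ∫ t in (0:ℝ)..(1/2), t * g t = D₁ / ((b - a) ^ 2) :=
    (eq_div_iff (pow_ne_zero 2 hba')).mpr (by linear_combination hsub3)
  have eX2 : ∫ t in (1/2:ℝ)..1, t * g t = D₂ / ((b - a) ^ 2) :=
    (eq_div_iff (pow_ne_zero 2 hba')).mpr (by linear_combination hsub4)
  rw [hfm, hfb, hIf, hKsplit, hKp1, hKp2, eY1, eY2, eX1, eX2, hC']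
  field_simp
  ring
end

section
/- Let a, b ∈ ℝ and let c > 0 be a real constant (representing e^{iφ} for 0 ≤ φ ≤ π/2) with a < a + c(b−a). Let f be a positive real-valued function differentiable on an open set containing [a, a + c(b−a)] whose derivative f′ is integrable on [a, a + c(b−a)]. Then (1/6)[f(a) + 4 f(a + c(b−a)/2) + f(a + c(b−a))] − (1/(c(b−a))) ∫_a^{a+c(b−a)} f(x) dx = c(b−a) ∫_0^1 p(t) f′(a + t c (b−a)) dt, where p(t) = t − 1/6 for t ∈ [0, 1/2) and p(t) = t − 5/6 for t ∈ [1/2, 1]. -/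
open intervalIntegral MeasureTheory Set

/-- **Simpson kernel identity for `c`-convex domains (Lemma 3.1).** For a real
constant `c > 0` (playing the role of `e^{iφ}`) with `a < a + c * (b - a)`,
and `f` positive and differentiable on an open set containing
`[a, a + c * (b - a)]` with derivative `f'` integrable there, the Simpson
quadrature error on `[a, a + c * (b - a)]` equals
`c * (b - a) * ∫ t in 0..1, p t * f' (a + t * c * (b - a))` where
`p t = t - 1/6` on `[0, 1/2)` and `p t = t - 5/6` on `[1/2, 1]`. -/
theorem simpson_kernel_identity_phi (a b c : ℝ) (hc : 0 < c)
    (hab : a < a + c * (b - a))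
    (U : Set ℝ) (hU : IsOpen U) (hsub : Set.Icc a (a + c * (b - a)) ⊆ U)
    (f f' : ℝ → ℝ) (hpos : ∀ x ∈ U, 0 < f x)
    (hderiv : ∀ x ∈ U, HasDerivAt f (f' x) x)
    (hint : IntervalIntegrable f' MeasureTheory.volume a (a + c * (b - a))) :
    (1 / 6) * (f a + 4 * f (a + c * (b - a) / 2) + f (a + c * (b - a))) -
        (1 / (c * (b - a))) * ∫ x in a..(a + c * (b - a)), f x =
      c * (b - a) *
        ∫ t in (0 : ℝ)..1,
          (if t < 1 / 2 then t - 1 / 6 else t - 5 / 6) * f' (a + t * c * (b - a)) := by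
  set h : ℝ := c * (b - a) with hhdef
  have hh : 0 < h := by linarith
  have hne : h ≠ 0 := ne_of_gt hh
  -- the composed function and its derivative
  set v : ℝ → ℝ := fun t => f (a + t * h) with hvdef
  set w : ℝ → ℝ := fun t => h * f' (a + t * h) with hwdef
  have hmem : ∀ t ∈ Set.Icc (0:ℝ) 1, a + t * h ∈ U := by
    intro t ht
    apply hsub
    constructor
    · nlinarith [ht.1, ht.2]
    · nlinarith [ht.1, ht.2]
  have hvderiv : ∀ t ∈ Set.Icc (0:ℝ) 1, HasDerivAt v (w t) t := by
    intro t ht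
    have hg : HasDerivAt (fun t : ℝ => a + t * h) h t := by
      simpa using ((hasDerivAt_id t).mul_const h).const_add a
    have := (hderiv _ (hmem t ht)).comp t hg
    exact this.congr_deriv (by simp only [hwdef]; ring)
  -- integrability of w on [0,1]
  have hw : IntervalIntegrable w volume 0 1 := by
    have h1 := (hint.comp_add_left a).comp_mul_right (c := h)
    have e1 : (a - a) / h = 0 := by field_simp <;> ring
    have e2 : (a + h - a) / h = 1 := by field_simp <;> ring
    rw [e1, e2] at h1
    exact (h1.const_mul h)
  -- continuity of v on [0,1]
  have hvcont : ContinuousOn v (Set.Icc 0 1) := by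
    intro t ht
    exact ((hvderiv t ht).continuousAt).continuousWithinAt
  have hvint : IntervalIntegrable v volume 0 1 := by
    apply ContinuousOn.intervalIntegrable
    rwa [Set.uIcc_of_le (by norm_num : (0:ℝ) ≤ 1)]
  -- sub-interval memberships
  have hsub1 : Set.uIcc (0:ℝ) (1/2) ⊆ Set.Icc 0 1 := by
    rw [Set.uIcc_of_le (by norm_num : (0:ℝ) ≤ 1/2)]
    intro x hx; exact ⟨hx.1, by linarith [hx.2]⟩
  have hsub2 : Set.uIcc (1/2 : ℝ) 1 ⊆ Set.Icc 0 1 := by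
    rw [Set.uIcc_of_le (by norm_num : (1/2:ℝ) ≤ 1)]
    intro x hx; exact ⟨by linarith [hx.1], hx.2⟩
  have hw1 : IntervalIntegrable w volume 0 (1/2) :=
    hw.mono_set (by rw [Set.uIcc_of_le (by norm_num : (0:ℝ) ≤ 1)]; exact hsub1)
  have hw2 : IntervalIntegrable w volume (1/2) 1 :=
    hw.mono_set (by rw [Set.uIcc_of_le (by norm_num : (0:ℝ) ≤ 1)]; exact hsub2)
  have hv1 : IntervalIntegrable v volume 0 (1/2) :=
    hvint.mono_set (by rw [Set.uIcc_of_le (by norm_num : (0:ℝ) ≤ 1)]; exact hsub1)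
  have hv2 : IntervalIntegrable v volume (1/2) 1 :=
    hvint.mono_set (by rw [Set.uIcc_of_le (by norm_num : (0:ℝ) ≤ 1)]; exact hsub2)
  -- integration by parts on [0, 1/2]
  have ibp1 : ∫ t in (0:ℝ)..(1/2), (t - 1/6) * w t
      = (1/2 - 1/6) * v (1/2) - (0 - 1/6) * v 0 - ∫ t in (0:ℝ)..(1/2), v t := by
    have H := intervalIntegral.integral_mul_deriv_eq_deriv_mul (a := (0:ℝ)) (b := 1/2)
      (u := fun t : ℝ => t - 1/6) (u' := fun _ => (1:ℝ)) (v := v) (v' := w)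
      (fun x _ => by simpa using (hasDerivAt_id x).sub_const (1/6))
      (fun x hx => hvderiv x (hsub1 hx)) intervalIntegrable_const hw1
    simpa using H
  have ibp2 : ∫ t in (1/2:ℝ)..1, (t - 5/6) * w t
      = (1 - 5/6) * v 1 - (1/2 - 5/6) * v (1/2) - ∫ t in (1/2:ℝ)..1, v t := by
    have H := intervalIntegral.integral_mul_deriv_eq_deriv_mul (a := (1/2:ℝ)) (b := 1)
      (u := fun t : ℝ => t - 5/6) (u' := fun _ => (1:ℝ)) (v := v) (v' := w)
      (fun x _ => by simpa using (hasDerivAt_id x).sub_const (5/6))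
      (fun x hx => hvderiv x (hsub2 hx)) intervalIntegrable_const hw2
    simpa using H
  -- piecewise integrand equals the linear ones on each sub-integral
  have hae : ∀ᵐ t : ℝ ∂volume, t ≠ 1/2 := by
    rw [MeasureTheory.ae_iff]
    convert (measure_singleton (1/2:ℝ) : volume ({(1/2:ℝ)} : Set ℝ) = 0) using 2
    ext x; simp
  have half1 : ∀ t : ℝ, t ∈ Set.uIoc (0:ℝ) (1/2) → t ≠ 1/2 → t < 1/2 := by
    intro t hmem' ht
    rw [Set.uIoc_of_le (by norm_num : (0:ℝ) ≤ 1/2)] at hmem'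
    exact lt_of_le_of_ne hmem'.2 ht
  have half2 : ∀ t : ℝ, t ∈ Set.uIoc (1/2:ℝ) 1 → ¬ t < 1/2 := by
    intro t hmem'
    rw [Set.uIoc_of_le (by norm_num : (1/2:ℝ) ≤ 1)] at hmem'
    exact not_lt.mpr (le_of_lt hmem'.1)
  have hEq1 : ∫ t in (0:ℝ)..(1/2), (if t < 1/2 then t - 1/6 else t - 5/6) * w t
      = ∫ t in (0:ℝ)..(1/2), (t - 1/6) * w t := by
    apply intervalIntegral.integral_congr_ae
    filter_upwards [hae] with t ht hmem'
    rw [if_pos (half1 t hmem' ht)]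
  have hEq2 : ∫ t in (1/2:ℝ)..1, (if t < 1/2 then t - 1/6 else t - 5/6) * w t
      = ∫ t in (1/2:ℝ)..1, (t - 5/6) * w t := by
    apply intervalIntegral.integral_congr_ae
    filter_upwards with t hmem'
    rw [if_neg (half2 t hmem')]
  -- integrability of piecewise integrand on sub-intervals
  have hpw1 : IntervalIntegrable (fun t => (if t < 1/2 then t - 1/6 else t - 5/6) * w t) volume 0 (1/2) := by
    have base : IntervalIntegrable (fun t => (t - 1/6) * w t) volume 0 (1/2) :=
      hw1.continuousOn_mul (by fun_prop)
    apply base.congr_ae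
    filter_upwards [ae_restrict_of_ae hae, ae_restrict_mem measurableSet_uIoc] with t ht hmem'
    rw [if_pos (half1 t hmem' ht)]
  have hpw2 : IntervalIntegrable (fun t => (if t < 1/2 then t - 1/6 else t - 5/6) * w t) volume (1/2) 1 := by
    have base : IntervalIntegrable (fun t => (t - 5/6) * w t) volume (1/2) 1 :=
      hw2.continuousOn_mul (by fun_prop)
    apply base.congr_ae
    filter_upwards [ae_restrict_mem measurableSet_uIoc] with t hmem'
    rw [if_neg (half2 t hmem')]
  -- split the integral
  have hsplit : ∫ t in (0:ℝ)..1, (if t < 1/2 then t - 1/6 else t - 5/6) * w t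
      = (∫ t in (0:ℝ)..(1/2), (if t < 1/2 then t - 1/6 else t - 5/6) * w t)
        + ∫ t in (1/2:ℝ)..1, (if t < 1/2 then t - 1/6 else t - 5/6) * w t :=
    (integral_add_adjacent_intervals hpw1 hpw2).symm
  -- change of variables for ∫ v
  have hchg : ∫ t in (0:ℝ)..1, v t = h⁻¹ * ∫ x in a..(a + h), f x := by
    have := integral_comp_mul_add f hne a (a := (0:ℝ)) (b := 1)
    simp only [mul_zero, zero_add, mul_one] at this
    calc ∫ t in (0:ℝ)..1, v t = ∫ t in (0:ℝ)..1, f (h * t + a) := by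
          apply intervalIntegral.integral_congr; intro t _
          simp only [hvdef]; congr 1; ring
      _ = h⁻¹ * ∫ x in a..(h + a), f x := by rw [this]; simp
      _ = h⁻¹ * ∫ x in a..(a + h), f x := by rw [add_comm h a]
  have hvsplit : (∫ t in (0:ℝ)..(1/2), v t) + ∫ t in (1/2:ℝ)..1, v t = ∫ t in (0:ℝ)..1, v t :=
    integral_add_adjacent_intervals hv1 hv2
  -- main computation
  have key : ∫ t in (0:ℝ)..1, (if t < 1/2 then t - 1/6 else t - 5/6) * w t
      = (1/6) * v 0 + (2/3) * v (1/2) + (1/6) * v 1 - ∫ t in (0:ℝ)..1, v t := by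
    rw [hsplit, hEq1, hEq2, ibp1, ibp2, ← hvsplit]; ring
  -- relate RHS of goal to key
  have hrhs : c * (b - a) * ∫ t in (0:ℝ)..1,
      (if t < 1/2 then t - 1/6 else t - 5/6) * f' (a + t * c * (b - a))
      = ∫ t in (0:ℝ)..1, (if t < 1/2 then t - 1/6 else t - 5/6) * w t := by
    rw [← hhdef, ← intervalIntegral.integral_const_mul]
    apply integral_congr
    intro t _
    simp only [hwdef]
    have : a + t * c * (b - a) = a + t * h := by rw [hhdef]; ring
    rw [this]; ring
  rw [hrhs, key, hchg]
  have e0 : v 0 = f a := by simp [hvdef]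
  have e1 : v 1 = f (a + h) := by simp [hvdef]
  have e2 : v (1/2) = f (a + h / 2) := by simp [hvdef]; ring_nf
  rw [e0, e1, e2, one_div]
  ring
end

section
/- Let a, b ∈ ℝ and let c > 0 be a real constant (representing e^{iφ} for 0 ≤ φ ≤ π/2) with a < a + c(b−a). Let f be a positive real-valued function differentiable on an open set containing [a, a + c(b−a)] with f′ integrable on [a, a + c(b−a)], and suppose |f′| is c-convex, i.e. |f′(a + t c (b−a))| ≤ (1−t)|f′(a)| + t|f′(b)| for all t ∈ [0,1]. Then |(1/6)[f(a) + 4 f(a + c(b−a)/2) + f(a + c(b−a))] − (1/(c(b−a))) ∫_a^{a+c(b−a)} f(x) dx| ≤ (5/72) c (b−a) [|f′(a)| + |f′(b)|]. -/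
open intervalIntegral MeasureTheory Set

lemma cubic_deriv (c1 c2 c3 t : ℝ) :
    HasDerivAt (fun t : ℝ => c1*t + c2*t^2 + c3*t^3) (c1 + 2*c2*t + 3*c3*t^2) t := by
  have h1 : HasDerivAt (fun t : ℝ => c1*t) (c1*1) t := (hasDerivAt_id t).const_mul c1
  have h2 : HasDerivAt (fun t : ℝ => c2*t^2) (c2*(2*t^1)) t := by
    simpa using (hasDerivAt_pow 2 t).const_mul c2
  have h3 : HasDerivAt (fun t : ℝ => c3*t^3) (c3*(3*t^2)) t := by
    simpa using (hasDerivAt_pow 3 t).const_mul c3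
  convert (h1.add h2).add h3 using 1
  all_goals first | rfl | ring

lemma integral_piece (α L A B x y : ℝ) :
    ∫ t in x..y, (t - α) * (L * ((1 - t) * A + t * B)) =
      (L*(-A*α)*y + (L*(A*(1+α) - B*α)/2)*y^2 + (L*(B-A)/3)*y^3)
      - (L*(-A*α)*x + (L*(A*(1+α) - B*α)/2)*x^2 + (L*(B-A)/3)*x^3) := by
  apply intervalIntegral.integral_eq_sub_of_hasDerivAt
  · intro t _
    convert cubic_deriv (L*(-A*α)) (L*(A*(1+α) - B*α)/2) (L*(B-A)/3) t using 1
    all_goals first | rfl | ring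
  · exact Continuous.intervalIntegrable (by continuity) x y

lemma J1val (L A B : ℝ) :
    ∫ t in (0:ℝ)..(1/2), |t - 1/6| * (L*((1-t)*A + t*B)) = (61*A + 29*B)*L/1296 := by
  have hi1 : IntervalIntegrable (fun t : ℝ => |t - 1/6| * (L*((1-t)*A + t*B))) volume 0 (1/6) :=
    Continuous.intervalIntegrable (by continuity) _ _
  have hi2 : IntervalIntegrable (fun t : ℝ => |t - 1/6| * (L*((1-t)*A + t*B))) volume (1/6) (1/2) :=
    Continuous.intervalIntegrable (by continuity) _ _
  rw [← integral_add_adjacent_intervals hi1 hi2]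
  have e1 : ∫ t in (0:ℝ)..(1/6), |t - 1/6| * (L*((1-t)*A + t*B))
      = - ∫ t in (0:ℝ)..(1/6), (t - 1/6) * (L*((1-t)*A + t*B)) := by
    rw [← intervalIntegral.integral_neg]
    apply integral_congr
    intro t ht
    rw [Set.uIcc_of_le (by norm_num : (0:ℝ) ≤ 1/6)] at ht
    dsimp only
    rw [abs_of_nonpos (by linarith [ht.2])]
    ring
  have e2 : ∫ t in (1/6:ℝ)..(1/2), |t - 1/6| * (L*((1-t)*A + t*B))
      = ∫ t in (1/6:ℝ)..(1/2), (t - 1/6) * (L*((1-t)*A + t*B)) := by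
    apply integral_congr
    intro t ht
    rw [Set.uIcc_of_le (by norm_num : (1/6:ℝ) ≤ 1/2)] at ht
    dsimp only
    rw [abs_of_nonneg (by linarith [ht.1])]
  rw [e1, e2, integral_piece, integral_piece]
  ring

lemma J2val (L A B : ℝ) :
    ∫ t in (1/2:ℝ)..1, |t - 5/6| * (L*((1-t)*A + t*B)) = (29*A + 61*B)*L/1296 := by
  have hi1 : IntervalIntegrable (fun t : ℝ => |t - 5/6| * (L*((1-t)*A + t*B))) volume (1/2) (5/6) :=
    Continuous.intervalIntegrable (by continuity) _ _
  have hi2 : IntervalIntegrable (fun t : ℝ => |t - 5/6| * (L*((1-t)*A + t*B))) volume (5/6) 1 :=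
    Continuous.intervalIntegrable (by continuity) _ _
  rw [← integral_add_adjacent_intervals hi1 hi2]
  have e1 : ∫ t in (1/2:ℝ)..(5/6), |t - 5/6| * (L*((1-t)*A + t*B))
      = - ∫ t in (1/2:ℝ)..(5/6), (t - 5/6) * (L*((1-t)*A + t*B)) := by
    rw [← intervalIntegral.integral_neg]
    apply integral_congr
    intro t ht
    rw [Set.uIcc_of_le (by norm_num : (1/2:ℝ) ≤ 5/6)] at ht
    dsimp only
    rw [abs_of_nonpos (by linarith [ht.2])]
    ring
  have e2 : ∫ t in (5/6:ℝ)..1, |t - 5/6| * (L*((1-t)*A + t*B))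
      = ∫ t in (5/6:ℝ)..1, (t - 5/6) * (L*((1-t)*A + t*B)) := by
    apply integral_congr
    intro t ht
    rw [Set.uIcc_of_le (by norm_num : (5/6:ℝ) ≤ 1)] at ht
    dsimp only
    rw [abs_of_nonneg (by linarith [ht.1])]
  rw [e1, e2, integral_piece, integral_piece]
  ring



/-- **Simpson type inequality for `c`-convex `|f'|` (Theorem 3.1).** If
`|f'|` is `c`-convex, i.e. `|f' (a + t * c * (b - a))| ≤ (1 - t) * |f' a| + t * |f' b|`
for all `t ∈ [0, 1]`, then the Simpson quadrature error on `[a, a + c * (b - a)]`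
is bounded by `(5/72) * c * (b - a) * (|f' a| + |f' b|)`. -/
theorem simpson_type_phi_convex (a b c : ℝ) (hc : 0 < c)
    (hab : a < a + c * (b - a))
    (U : Set ℝ) (hU : IsOpen U) (hsub : Set.Icc a (a + c * (b - a)) ⊆ U)
    (f f' : ℝ → ℝ) (hpos : ∀ x ∈ U, 0 < f x)
    (hderiv : ∀ x ∈ U, HasDerivAt f (f' x) x)
    (hint : IntervalIntegrable f' MeasureTheory.volume a (a + c * (b - a)))
    (hconv : ∀ t ∈ Set.Icc (0 : ℝ) 1,
      |f' (a + t * c * (b - a))| ≤ (1 - t) * |f' a| + t * |f' b|) :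
    |(1 / 6) * (f a + 4 * f (a + c * (b - a) / 2) + f (a + c * (b - a))) -
        (1 / (c * (b - a))) * ∫ x in a..(a + c * (b - a)), f x| ≤
      (5 / 72) * (c * (b - a)) * (|f' a| + |f' b|) := by
  set L : ℝ := c * (b - a) with hLdef
  have hL : 0 < L := by simp only [hLdef]; linarith
  have hLne : L ≠ 0 := ne_of_gt hL
  set A : ℝ := |f' a| with hA
  set B : ℝ := |f' b| with hB
  -- convexity in terms of L
  have hconv' : ∀ t ∈ Set.Icc (0:ℝ) 1, |f' (a + t * L)| ≤ (1 - t) * A + t * B := by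
    intro t ht
    have h := hconv t ht
    have : a + t * c * (b - a) = a + t * L := by rw [hLdef]; ring
    rwa [this] at h
  -- membership
  have hmem : ∀ t ∈ Set.Icc (0:ℝ) 1, a + t * L ∈ U := by
    intro t ht
    apply hsub
    constructor
    · nlinarith [ht.1, ht.2]
    · nlinarith [ht.1, ht.2]
  -- derivative of g
  have hg : ∀ t ∈ Set.Icc (0:ℝ) 1, HasDerivAt (fun t => f (a + t * L)) (L * f' (a + t * L)) t := by
    intro t ht
    have h1 : HasDerivAt (fun t : ℝ => a + t * L) (1 * L) t :=
      ((hasDerivAt_id t).mul_const L).const_add a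
    have h2 : HasDerivAt (fun t : ℝ => f (a + t * L)) (f' (a + t * L) * (1 * L)) t :=
      (hderiv _ (hmem t ht)).comp t h1
    simpa [mul_comm] using h2
  have hgc : ContinuousOn (fun t => f (a + t * L)) (Set.Icc 0 1) :=
    fun t ht => (hg t ht).continuousAt.continuousWithinAt
  have hsub1 : Set.uIcc (0:ℝ) (1/2) ⊆ Set.Icc (0:ℝ) 1 := by
    rw [Set.uIcc_of_le (by norm_num : (0:ℝ) ≤ 1/2)]
    exact Set.Icc_subset_Icc le_rfl (by norm_num)
  have hsub2 : Set.uIcc (1/2:ℝ) 1 ⊆ Set.Icc (0:ℝ) 1 := by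
    rw [Set.uIcc_of_le (by norm_num : (1/2:ℝ) ≤ 1)]
    exact Set.Icc_subset_Icc (by norm_num) le_rfl
  have h12u : Set.uIcc (0:ℝ) (1/2) ⊆ Set.uIcc (0:ℝ) 1 := by
    rw [Set.uIcc_of_le (by norm_num : (0:ℝ) ≤ 1)]; exact hsub1
  have h21u : Set.uIcc (1/2:ℝ) 1 ⊆ Set.uIcc (0:ℝ) 1 := by
    rw [Set.uIcc_of_le (by norm_num : (0:ℝ) ≤ 1)]; exact hsub2
  -- integrability of t ↦ f' (a + t * L) on [0,1]
  have hh1 : IntervalIntegrable (fun x => f' (x + a)) volume 0 L := by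
    have h := hint.comp_add_right a
    simpa using h
  have hh : IntervalIntegrable (fun t => f' (a + t * L)) volume 0 1 := by
    have h2 := hh1.comp_mul_left (c := L)
    rw [zero_div, div_self hLne] at h2
    have : (fun t : ℝ => f' (a + t * L)) = fun x => f' (L * x + a) := by
      funext t; congr 1; ring
    rw [this]
    exact h2
  have hhL : IntervalIntegrable (fun t => L * f' (a + t * L)) volume 0 1 := hh.const_mul L
  -- g integrable on subintervals
  have hgi1 : IntervalIntegrable (fun t => f (a + t * L)) volume 0 (1/2) :=
    (hgc.mono hsub1).intervalIntegrable
  have hgi2 : IntervalIntegrable (fun t => f (a + t * L)) volume (1/2) 1 :=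
    (hgc.mono hsub2).intervalIntegrable
  -- integration by parts on [0, 1/2]
  have i1 : (∫ t in (0:ℝ)..(1/2), (t - 1/6) * (L * f' (a + t * L)))
      = (1/3) * f (a + L/2) + (1/6) * f a - ∫ t in (0:ℝ)..(1/2), f (a + t * L) := by
    have hu : ∀ x ∈ Set.uIcc (0:ℝ) (1/2), HasDerivAt (fun t : ℝ => t - 1/6)
        ((fun _ : ℝ => (1:ℝ)) x) x := fun x _ => (hasDerivAt_id x).sub_const (1/6)
    have h := intervalIntegral.integral_mul_deriv_eq_deriv_mul hu
      (fun t ht => hg t (hsub1 ht)) intervalIntegrable_const (hhL.mono_set h12u)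
    simp only [one_mul] at h
    rw [h, show a + 1/2 * L = a + L/2 from by ring, show a + 0 * L = a from by ring]
    ring
  -- integration by parts on [1/2, 1]
  have i2 : (∫ t in (1/2:ℝ)..1, (t - 5/6) * (L * f' (a + t * L)))
      = (1/6) * f (a + L) + (1/3) * f (a + L/2) - ∫ t in (1/2:ℝ)..1, f (a + t * L) := by
    have hu : ∀ x ∈ Set.uIcc (1/2:ℝ) 1, HasDerivAt (fun t : ℝ => t - 5/6)
        ((fun _ : ℝ => (1:ℝ)) x) x := fun x _ => (hasDerivAt_id x).sub_const (5/6)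
    have h := intervalIntegral.integral_mul_deriv_eq_deriv_mul hu
      (fun t ht => hg t (hsub2 ht)) intervalIntegrable_const (hhL.mono_set h21u)
    simp only [one_mul] at h
    rw [h, show a + 1/2 * L = a + L/2 from by ring]
    ring
  -- adjacency
  have hadj : (∫ t in (0:ℝ)..(1/2), f (a + t * L)) + ∫ t in (1/2:ℝ)..1, f (a + t * L)
      = ∫ t in (0:ℝ)..1, f (a + t * L) := integral_add_adjacent_intervals hgi1 hgi2
  -- substitution
  have hsubst : (∫ t in (0:ℝ)..1, f (a + t * L)) = 1 / L * ∫ x in a..(a + L), f x := by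
    have h := intervalIntegral.integral_comp_mul_add (a := (0:ℝ)) (b := 1) f hLne a
    rw [mul_zero, zero_add, mul_one, add_comm L a, smul_eq_mul] at h
    rw [show (fun t : ℝ => f (a + t * L)) = fun x => f (L * x + a) by funext t; congr 1; ring]
    rw [h, one_div]
  -- key identity
  have key : (1 / 6) * (f a + 4 * f (a + L / 2) + f (a + L)) -
        (1 / L) * ∫ x in a..(a + L), f x
      = (∫ t in (0:ℝ)..(1/2), (t - 1/6) * (L * f' (a + t * L)))
        + ∫ t in (1/2:ℝ)..1, (t - 5/6) * (L * f' (a + t * L)) := by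
    rw [i1, i2]
    linarith [hadj, hsubst]
  -- bounds
  have hprod1 : IntervalIntegrable (fun t => (t - 1/6) * (L * f' (a + t * L))) volume 0 (1/2) :=
    (hhL.mono_set h12u).continuousOn_mul (Continuous.continuousOn (by fun_prop))
  have hprod2 : IntervalIntegrable (fun t => (t - 5/6) * (L * f' (a + t * L))) volume (1/2) 1 :=
    (hhL.mono_set h21u).continuousOn_mul (Continuous.continuousOn (by fun_prop))
  have b1 : |∫ t in (0:ℝ)..(1/2), (t - 1/6) * (L * f' (a + t * L))|
      ≤ (61*A + 29*B)*L/1296 := by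
    calc |∫ t in (0:ℝ)..(1/2), (t - 1/6) * (L * f' (a + t * L))|
        ≤ ∫ t in (0:ℝ)..(1/2), |(t - 1/6) * (L * f' (a + t * L))| :=
          intervalIntegral.abs_integral_le_integral_abs (by norm_num)
      _ ≤ ∫ t in (0:ℝ)..(1/2), |t - 1/6| * (L*((1-t)*A + t*B)) := by
          apply intervalIntegral.integral_mono_on (by norm_num) hprod1.abs
            (Continuous.intervalIntegrable (by fun_prop) _ _)
          intro t ht
          rw [abs_mul, abs_mul, abs_of_pos hL]
          exact mul_le_mul_of_nonneg_left
            (mul_le_mul_of_nonneg_left (hconv' t ⟨ht.1, by linarith [ht.2]⟩) hL.le)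
            (abs_nonneg _)
      _ = (61*A + 29*B)*L/1296 := J1val L A B
  have b2 : |∫ t in (1/2:ℝ)..1, (t - 5/6) * (L * f' (a + t * L))|
      ≤ (29*A + 61*B)*L/1296 := by
    calc |∫ t in (1/2:ℝ)..1, (t - 5/6) * (L * f' (a + t * L))|
        ≤ ∫ t in (1/2:ℝ)..1, |(t - 5/6) * (L * f' (a + t * L))| :=
          intervalIntegral.abs_integral_le_integral_abs (by norm_num)
      _ ≤ ∫ t in (1/2:ℝ)..1, |t - 5/6| * (L*((1-t)*A + t*B)) := by
          apply intervalIntegral.integral_mono_on (by norm_num) hprod2.abs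
            (Continuous.intervalIntegrable (by fun_prop) _ _)
          intro t ht
          rw [abs_mul, abs_mul, abs_of_pos hL]
          exact mul_le_mul_of_nonneg_left
            (mul_le_mul_of_nonneg_left (hconv' t ⟨by linarith [ht.1], ht.2⟩) hL.le)
            (abs_nonneg _)
      _ = (29*A + 61*B)*L/1296 := J2val L A B
  calc |(1 / 6) * (f a + 4 * f (a + L / 2) + f (a + L)) - (1 / L) * ∫ x in a..(a + L), f x|
      = |(∫ t in (0:ℝ)..(1/2), (t - 1/6) * (L * f' (a + t * L)))
        + ∫ t in (1/2:ℝ)..1, (t - 5/6) * (L * f' (a + t * L))| := by rw [key]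
    _ ≤ |∫ t in (0:ℝ)..(1/2), (t - 1/6) * (L * f' (a + t * L))|
        + |∫ t in (1/2:ℝ)..1, (t - 5/6) * (L * f' (a + t * L))| := abs_add_le _ _
    _ ≤ (61*A + 29*B)*L/1296 + (29*A + 61*B)*L/1296 := add_le_add b1 b2
    _ = (5/72) * L * (A + B) := by ring
end

section
/- Let a, b ∈ ℝ and let c > 0 be a real constant (representing e^{iφ} for 0 ≤ φ ≤ π/2) with a < a + c(b−a). Let f be a positive real-valued function differentiable on an open set containing [a, a + c(b−a)] with f′ integrable on [a, a + c(b−a)]. Fix q > 1 and set p = q/(q−1). Suppose |f′|^q is c-convex, i.e. |f′(a + t c (b−a))|^q ≤ (1−t)|f′(a)|^q + t|f′(b)|^q for all t ∈ [0,1]. Then |(1/6)[f(a) + 4 f(a + c(b−a)/2) + f(a + c(b−a))] − (1/(c(b−a))) ∫_a^{a+c(b−a)} f(x) dx| ≤ c(b−a) ((1 + 2^{p+1})/(6^{p+1}(p+1)))^{1/p} × { ((3/8)|f′(a)|^q + (1/8)|f′(b)|^q)^{1/q} + ((1/8)|f′(a)|^q + (3/8)|f′(b)|^q)^{1/q} }.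 -/
open MeasureTheory intervalIntegral Real Set



lemma lin_integral (a u v A B : ℝ) :
    ∫ x in u..v, (A + B * (x - a)) = A * (v - u) + B * ((v - a) ^ 2 - (u - a) ^ 2) / 2 := by
  have h1 : IntervalIntegrable (fun _ : ℝ => A) volume u v := intervalIntegrable_const
  have h2 : IntervalIntegrable (fun x : ℝ => B * (x - a)) volume u v :=
    (Continuous.intervalIntegrable (by continuity) u v)
  rw [intervalIntegral.integral_add h1 h2, intervalIntegral.integral_const,
    intervalIntegral.integral_const_mul]
  have : ∫ x in u..v, (x - a) = ∫ x in u - a..v - a, x :=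
    intervalIntegral.integral_comp_sub_right (fun x => x) a
  rw [this, integral_id]
  simp only [smul_eq_mul]
  ring

lemma kernel_integral (α u v p : ℝ) (hp : 0 < p) (h1 : u ≤ α) (h2 : α ≤ v) :
    ∫ x in u..v, |x - α| ^ p = ((α - u) ^ (p + 1) + (v - α) ^ (p + 1)) / (p + 1) := by
  have hcont : Continuous (fun x : ℝ => |x - α| ^ p) := by
    apply Continuous.rpow_const (by continuity)
    intro x; right; exact hp.le
  have hi1 : IntervalIntegrable (fun x : ℝ => |x - α| ^ p) volume u α :=
    hcont.intervalIntegrable _ _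
  have hi2 : IntervalIntegrable (fun x : ℝ => |x - α| ^ p) volume α v :=
    hcont.intervalIntegrable _ _
  rw [← intervalIntegral.integral_add_adjacent_intervals hi1 hi2]
  have e1 : ∫ x in u..α, |x - α| ^ p = (α - u) ^ (p + 1) / (p + 1) := by
    have : ∫ x in u..α, |x - α| ^ p = ∫ x in u..α, (α - x) ^ p := by
      apply intervalIntegral.integral_congr
      intro x hx
      rw [Set.uIcc_of_le h1] at hx
      simp only
      rw [abs_of_nonpos (by linarith [hx.2]), neg_sub]
    rw [this]
    have := intervalIntegral.integral_comp_sub_left (a := u) (b := α) (fun x => x ^ p) α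
    rw [this, sub_self]
    rw [integral_rpow (Or.inl (by linarith))]
    rw [Real.zero_rpow (by positivity)]
    ring
  have e2 : ∫ x in α..v, |x - α| ^ p = (v - α) ^ (p + 1) / (p + 1) := by
    have : ∫ x in α..v, |x - α| ^ p = ∫ x in α..v, (x - α) ^ p := by
      apply intervalIntegral.integral_congr
      intro x hx
      rw [Set.uIcc_of_le h2] at hx
      simp only
      rw [abs_of_nonneg (by linarith [hx.1])]
    rw [this]
    have := intervalIntegral.integral_comp_sub_right (a := α) (b := v) (fun x => x ^ p) α
    rw [this, sub_self]
    rw [integral_rpow (Or.inl (by linarith))]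
    rw [Real.zero_rpow (by positivity)]
    ring
  rw [e1, e2]; ring


lemma holder_piece (u v α C D : ℝ) (huv : u ≤ v) (f' : ℝ → ℝ)
    (hmeas : AEStronglyMeasurable f' (volume.restrict (Set.Ioc u v)))
    (p q : ℝ) (hpq : Real.HolderConjugate p q)
    (hbound : ∀ x ∈ Set.Icc u v, |f' x| ^ q ≤ C + D * x) :
    |∫ x in u..v, (x - α) * f' x| ≤
      (∫ x in u..v, |x - α| ^ p) ^ (1 / p) * (∫ x in u..v, (C + D * x)) ^ (1 / q) := by
  set μ := volume.restrict (Set.Ioc u v) with hμ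
  haveI : IsFiniteMeasure μ := by
    constructor
    rw [hμ, Measure.restrict_apply_univ]
    exact measure_Ioc_lt_top
  have hq0 : q ≠ 0 := hpq.symm.ne_zero
  have hlin_nonneg : ∀ x ∈ Set.Icc u v, 0 ≤ C + D * x := fun x hx =>
    le_trans (Real.rpow_nonneg (abs_nonneg _) q) (hbound x hx)
  set E := |C| + |D| * (|u| + |v|) with hE
  have hEb : ∀ x ∈ Set.Icc u v, C + D * x ≤ E := by
    intro x hx
    have hxa : |x| ≤ |u| + |v| := by
      rw [abs_le]
      constructor
      · have := neg_abs_le u; linarith [hx.1, abs_nonneg v]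
      · have := le_abs_self v; linarith [hx.2, abs_nonneg u]
    have : D * x ≤ |D| * (|u| + |v|) := by
      calc D * x ≤ |D * x| := le_abs_self _
        _ = |D| * |x| := abs_mul _ _
        _ ≤ |D| * (|u| + |v|) := by
            exact mul_le_mul_of_nonneg_left hxa (abs_nonneg _)
    have := le_abs_self C
    rw [hE]; linarith
  -- Memℒp facts
  have hmem_f' : MemLp f' (ENNReal.ofReal q) μ := by
    apply MemLp.of_bound hmeas (E ^ (1 / q))
    rw [hμ, ae_restrict_iff' measurableSet_Ioc]
    filter_upwards with x hx
    have hx' : x ∈ Set.Icc u v := Set.Ioc_subset_Icc_self hx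
    have h1 : |f' x| = (|f' x| ^ q) ^ (1 / q) := by
      rw [← Real.rpow_mul (abs_nonneg _), mul_one_div, div_self hq0, Real.rpow_one]
    rw [Real.norm_eq_abs, h1]
    apply Real.rpow_le_rpow (Real.rpow_nonneg (abs_nonneg _) q)
      (le_trans (hbound x hx') (hEb x hx')) (one_div_nonneg.mpr hpq.symm.nonneg)
  have hmem_u : MemLp (fun x => x - α) (ENNReal.ofReal p) μ := by
    apply MemLp.of_bound ((continuous_id.sub continuous_const).aestronglyMeasurable)
      (|u| + |v| + |α|)
    rw [hμ, ae_restrict_iff' measurableSet_Ioc]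
    filter_upwards with x hx
    have h1 : |x| ≤ |u| + |v| := by
      rw [abs_le]
      constructor
      · have := neg_abs_le u; linarith [hx.1.le, abs_nonneg v]
      · have := le_abs_self v; linarith [hx.2, abs_nonneg u]
    calc ‖x - α‖ = |x - α| := rfl
      _ ≤ |x| + |α| := abs_sub _ _
      _ ≤ |u| + |v| + |α| := by linarith
  -- integrability of |f'|^q and of the linear bound
  have hint_q : IntegrableOn (fun x => |f' x| ^ q) (Set.Ioc u v) volume := by
    have : MemLp (fun x => |f' x| ^ q) 1 μ := by
      apply MemLp.of_bound (((hmeas.norm.aemeasurable).pow aemeasurable_const).aestronglyMeasurable) E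
      rw [hμ, ae_restrict_iff' measurableSet_Ioc]
      filter_upwards with x hx
      have hx' : x ∈ Set.Icc u v := Set.Ioc_subset_Icc_self hx
      simp only [Real.norm_eq_abs, abs_abs]
      rw [abs_of_nonneg (Real.rpow_nonneg (abs_nonneg _) q)]
      exact le_trans (hbound x hx') (hEb x hx')
    exact memLp_one_iff_integrable.mp this
  have hint_lin : IntegrableOn (fun x => C + D * x) (Set.Ioc u v) volume :=
    (Continuous.integrableOn_Ioc (by continuity))
  -- main chain
  calc |∫ x in u..v, (x - α) * f' x|
      = |∫ x in Set.Ioc u v, (x - α) * f' x| := by rw [intervalIntegral.integral_of_le huv]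
    _ ≤ ∫ x in Set.Ioc u v, ‖(x - α) * f' x‖ := by
        rw [← Real.norm_eq_abs]
        exact MeasureTheory.norm_integral_le_integral_norm _
    _ = ∫ x in Set.Ioc u v, ‖x - α‖ * ‖f' x‖ := by
        congr 1; funext x; rw [norm_mul]
    _ ≤ (∫ x in Set.Ioc u v, ‖x - α‖ ^ p) ^ (1 / p) * (∫ x in Set.Ioc u v, ‖f' x‖ ^ q) ^ (1 / q) :=
        MeasureTheory.integral_mul_norm_le_Lp_mul_Lq hpq hmem_u hmem_f'
    _ ≤ (∫ x in u..v, |x - α| ^ p) ^ (1 / p) * (∫ x in u..v, (C + D * x)) ^ (1 / q) := by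
        rw [intervalIntegral.integral_of_le huv, intervalIntegral.integral_of_le huv]
        apply mul_le_mul_of_nonneg_left
        · apply Real.rpow_le_rpow
          · exact integral_nonneg fun x => Real.rpow_nonneg (norm_nonneg _) q
          · apply setIntegral_mono_on _ hint_lin measurableSet_Ioc
            · intro x hx
              exact hbound x (Set.Ioc_subset_Icc_self hx)
            · simpa [Real.norm_eq_abs] using hint_q
          · exact one_div_nonneg.mpr hpq.symm.nonneg
        · apply Real.rpow_nonneg
          exact integral_nonneg fun x => Real.rpow_nonneg (norm_nonneg _) p


set_option maxHeartbeats 1600000 in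
/-- **Simpson type inequality via Hölder (Theorem 3.2).** If `|f'|^q` is
`c`-convex for some `q > 1` and `p = q / (q - 1)`, then the Simpson quadrature
error on `[a, a + c * (b - a)]` is bounded by
`c * (b - a) * ((1 + 2^(p+1)) / (6^(p+1) * (p+1)))^(1/p) *
  (((3/8) * |f' a|^q + (1/8) * |f' b|^q)^(1/q) + ((1/8) * |f' a|^q + (3/8) * |f' b|^q)^(1/q))`. -/
theorem simpson_type_phi_convex_holder (a b c : ℝ) (hc : 0 < c)
    (hab : a < a + c * (b - a))
    (U : Set ℝ) (hU : IsOpen U) (hsub : Set.Icc a (a + c * (b - a)) ⊆ U)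
    (f f' : ℝ → ℝ) (hpos : ∀ x ∈ U, 0 < f x)
    (hderiv : ∀ x ∈ U, HasDerivAt f (f' x) x)
    (hint : IntervalIntegrable f' MeasureTheory.volume a (a + c * (b - a)))
    (q p : ℝ) (hq : 1 < q) (hp : p = q / (q - 1))
    (hconv : ∀ t ∈ Set.Icc (0 : ℝ) 1,
      |f' (a + t * c * (b - a))| ^ q ≤ (1 - t) * |f' a| ^ q + t * |f' b| ^ q) :
    |(1 / 6) * (f a + 4 * f (a + c * (b - a) / 2) + f (a + c * (b - a))) -
        (1 / (c * (b - a))) * ∫ x in a..(a + c * (b - a)), f x| ≤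
      c * (b - a) * ((1 + 2 ^ (p + 1)) / (6 ^ (p + 1) * (p + 1))) ^ (1 / p) *
        (((3 / 8) * |f' a| ^ q + (1 / 8) * |f' b| ^ q) ^ (1 / q) +
          ((1 / 8) * |f' a| ^ q + (3 / 8) * |f' b| ^ q) ^ (1 / q)) := by
  have hh : 0 < c * (b - a) := by linarith
  set h := c * (b - a) with hh_def
  set R := a + h with hR_def
  have hq0 : q ≠ 0 := by linarith
  have hpq : p.HolderConjugate q := by
    rw [hp]
    exact (Real.HolderConjugate.conjExponent hq).symm
  have hp1 : 1 < p := hpq.lt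
  have hp0 : 0 < p := hpq.pos
  set A := |f' a| ^ q with hA_def
  set B := |f' b| ^ q with hB_def
  have hA : 0 ≤ A := Real.rpow_nonneg (abs_nonneg _) q
  have hB : 0 ≤ B := Real.rpow_nonneg (abs_nonneg _) q
  set m := a + h / 2 with hm_def
  clear_value h R A B m
  have ham : a ≤ m := by rw [hm_def]; linarith
  have hmR : m ≤ R := by rw [hm_def, hR_def]; linarith
  have haR : a ≤ R := ham.trans hmR
  have hIccsub : Set.Icc a R ⊆ U := hsub
  have hderiv' : ∀ x ∈ Set.Icc a R, HasDerivAt f (f' x) x := fun x hx => hderiv x (hIccsub hx)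
  have hfc : ContinuousOn f (Set.Icc a R) := fun x hx =>
    ((hderiv' x hx).continuousAt).continuousWithinAt
  have hfint : IntervalIntegrable f volume a R :=
    ContinuousOn.intervalIntegrable (by rw [Set.uIcc_of_le haR]; exact hfc)
  have hsub1 : Set.uIcc a m ⊆ Set.uIcc a R := by
    rw [Set.uIcc_of_le ham, Set.uIcc_of_le haR]
    exact Set.Icc_subset_Icc le_rfl hmR
  have hsub2 : Set.uIcc m R ⊆ Set.uIcc a R := by
    rw [Set.uIcc_of_le hmR, Set.uIcc_of_le haR]
    exact Set.Icc_subset_Icc ham le_rfl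
  have hfint1 : IntervalIntegrable f volume a m := hfint.mono_set hsub1
  have hfint2 : IntervalIntegrable f volume m R := hfint.mono_set hsub2
  have hf'int1 : IntervalIntegrable f' volume a m := hint.mono_set hsub1
  have hf'int2 : IntervalIntegrable f' volume m R := hint.mono_set hsub2
  -- integration by parts on both halves
  have e1 : ∫ x in a..m, (x - (a + h / 6)) * f' x
      = (m - (a + h / 6)) * f m - (a - (a + h / 6)) * f a - ∫ x in a..m, f x := by
    have := intervalIntegral.integral_mul_deriv_eq_deriv_mul
      (u := fun x => x - (a + h / 6)) (u' := fun _ => (1 : ℝ)) (v := f) (v' := f')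
      (fun x _ => (hasDerivAt_id x).sub_const _)
      (fun x hx => hderiv' x (by rw [Set.uIcc_of_le ham] at hx; exact ⟨hx.1, hx.2.trans hmR⟩))
      intervalIntegrable_const hf'int1
    simpa using this
  have e2 : ∫ x in m..R, (x - (a + 5 * h / 6)) * f' x
      = (R - (a + 5 * h / 6)) * f R - (m - (a + 5 * h / 6)) * f m - ∫ x in m..R, f x := by
    have := intervalIntegral.integral_mul_deriv_eq_deriv_mul
      (u := fun x => x - (a + 5 * h / 6)) (u' := fun _ => (1 : ℝ)) (v := f) (v' := f')
      (fun x _ => (hasDerivAt_id x).sub_const _)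
      (fun x hx => hderiv' x (by rw [Set.uIcc_of_le hmR] at hx; exact ⟨ham.trans hx.1, hx.2⟩))
      intervalIntegrable_const hf'int2
    simpa using this
  have esplit : ∫ x in a..R, f x = (∫ x in a..m, f x) + ∫ x in m..R, f x :=
    (intervalIntegral.integral_add_adjacent_intervals hfint1 hfint2).symm
  -- pointwise convexity bound, in the form C + D * x
  set D := (B - A) / h with hD_def
  set C := A - D * a with hC_def
  clear_value D C
  have key : ∀ x ∈ Set.Icc a R, |f' x| ^ q ≤ C + D * x := by
    intro x hx
    obtain ⟨hx1, hx2⟩ := hx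
    rw [hR_def] at hx2
    have ht : (x - a) / h ∈ Set.Icc (0 : ℝ) 1 :=
      ⟨div_nonneg (by linarith) hh.le, by rw [div_le_one hh]; linarith⟩
    have harg : a + ((x - a) / h) * c * (b - a) = x := by
      have e : ((x - a) / h) * c * (b - a) = ((x - a) / h) * h := by rw [mul_assoc, ← hh_def]
      rw [e, div_mul_cancel₀ _ hh.ne']; ring
    have hcv := hconv ((x - a) / h) ht
    rw [harg] at hcv
    calc |f' x| ^ q ≤ (1 - (x - a) / h) * A + ((x - a) / h) * B := hcv
      _ = C + D * x := by rw [hC_def, hD_def]; field_simp; ring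
  -- Hölder on both halves
  have hmeas1 : AEStronglyMeasurable f' (volume.restrict (Set.Ioc a m)) :=
    hf'int1.1.aestronglyMeasurable
  have hmeas2 : AEStronglyMeasurable f' (volume.restrict (Set.Ioc m R)) :=
    hf'int2.1.aestronglyMeasurable
  have H1 := holder_piece a m (a + h / 6) C D ham f' hmeas1 p q hpq
    (fun x hx => key x ⟨hx.1, hx.2.trans hmR⟩)
  have H2 := holder_piece m R (a + 5 * h / 6) C D hmR f' hmeas2 p q hpq
    (fun x hx => key x ⟨ham.trans hx.1, hx.2⟩)
  -- kernel integrals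
  have K1 : ∫ x in a..m, |x - (a + h / 6)| ^ p
      = ((h / 6) ^ (p + 1) + (h / 3) ^ (p + 1)) / (p + 1) := by
    have e := kernel_integral (a + h / 6) a m p hp0 (by linarith) (by rw [hm_def]; linarith)
    rw [e, show a + h / 6 - a = h / 6 from by ring,
      show m - (a + h / 6) = h / 3 from by rw [hm_def]; ring]
  have K2 : ∫ x in m..R, |x - (a + 5 * h / 6)| ^ p
      = ((h / 3) ^ (p + 1) + (h / 6) ^ (p + 1)) / (p + 1) := by
    have e := kernel_integral (a + 5 * h / 6) m R p hp0 (by rw [hm_def]; linarith)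
      (by rw [hR_def]; linarith)
    rw [e, show a + 5 * h / 6 - m = h / 3 from by rw [hm_def]; ring,
      show R - (a + 5 * h / 6) = h / 6 from by rw [hR_def]; ring]
  -- linear integrals
  have L1 : ∫ x in a..m, (C + D * x) = h * (3 / 8 * A + 1 / 8 * B) := by
    have e := lin_integral 0 a m C D
    simp only [sub_zero] at e
    rw [e, hm_def, hC_def, hD_def]
    field_simp
    ring
  have L2 : ∫ x in m..R, (C + D * x) = h * (1 / 8 * A + 3 / 8 * B) := by
    have e := lin_integral 0 m R C D
    simp only [sub_zero] at e
    rw [e, hm_def, hR_def, hC_def, hD_def]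
    field_simp
    ring
  -- value of the kernel integral as h^(p+1) * K
  have h2p : (0 : ℝ) < 2 ^ (p + 1) := Real.rpow_pos_of_pos (by norm_num) _
  have h3p : (0 : ℝ) < 3 ^ (p + 1) := Real.rpow_pos_of_pos (by norm_num) _
  have h6p : (0 : ℝ) < 6 ^ (p + 1) := Real.rpow_pos_of_pos (by norm_num) _
  have hp1' : (0 : ℝ) < p + 1 := by linarith
  have KK : ((h / 6) ^ (p + 1) + (h / 3) ^ (p + 1)) / (p + 1)
      = h ^ (p + 1) * ((1 + 2 ^ (p + 1)) / (6 ^ (p + 1) * (p + 1))) := by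
    have e6 : (h / 6) ^ (p + 1) = h ^ (p + 1) / 6 ^ (p + 1) :=
      Real.div_rpow hh.le (by norm_num) _
    have e3 : (h / 3) ^ (p + 1) = h ^ (p + 1) / 3 ^ (p + 1) :=
      Real.div_rpow hh.le (by norm_num) _
    have e36 : (3 : ℝ) ^ (p + 1) * 2 ^ (p + 1) = 6 ^ (p + 1) := by
      rw [← Real.mul_rpow (by norm_num) (by norm_num)]; norm_num
    rw [e6, e3, ← e36]
    field_simp
  set K := (1 + 2 ^ (p + 1)) / (6 ^ (p + 1) * (p + 1)) with hK_def
  clear_value K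
  have hK : 0 ≤ K := by
    rw [hK_def]
    apply div_nonneg (by positivity)
    exact mul_nonneg h6p.le hp1'.le
  have hM1 : (0 : ℝ) ≤ 3 / 8 * A + 1 / 8 * B := by positivity
  have hM2 : (0 : ℝ) ≤ 1 / 8 * A + 3 / 8 * B := by positivity
  have pow_combine : ∀ M : ℝ, 0 ≤ M →
      (h ^ (p + 1) * K) ^ (1 / p) * (h * M) ^ (1 / q)
        = h * h * (K ^ (1 / p) * M ^ (1 / q)) := by
    intro M hM
    rw [Real.mul_rpow (Real.rpow_nonneg hh.le _) hK, Real.mul_rpow hh.le hM,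
      ← Real.rpow_mul hh.le]
    have e : h ^ ((p + 1) * (1 / p)) * K ^ (1 / p) * (h ^ (1 / q) * M ^ (1 / q))
        = (h ^ ((p + 1) * (1 / p)) * h ^ (1 / q)) * (K ^ (1 / p) * M ^ (1 / q)) := by ring
    rw [e, ← Real.rpow_add hh]
    have h1 : 1 / p + 1 / q = 1 := by
      rw [one_div, one_div]; exact hpq.inv_add_inv_eq_one
    have hexp : (p + 1) * (1 / p) + 1 / q = 2 := by
      have e2 : (p + 1) * (1 / p) = 1 + 1 / p := by field_simp
      rw [e2]; linarith
    rw [hexp, show (2 : ℝ) = ((2 : ℕ) : ℝ) from by norm_num, Real.rpow_natCast]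
    ring
  -- rewrite the LHS as a sum of the two kernel integrals divided by h
  have hrewrite : 1 / 6 * (f a + 4 * f m + f R) - 1 / h * ∫ x in a..R, f x
      = ((∫ x in a..m, (x - (a + h / 6)) * f' x)
          + ∫ x in m..R, (x - (a + 5 * h / 6)) * f' x) / h := by
    rw [e1, e2, esplit]
    set J1 := ∫ x in a..m, f x with hJ1
    set J2 := ∫ x in m..R, f x with hJ2
    clear_value J1 J2
    rw [hm_def, hR_def]
    field_simp
    ring
  rw [hrewrite, abs_div, abs_of_pos hh, div_le_iff₀ hh]
  calc |(∫ x in a..m, (x - (a + h / 6)) * f' x)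
          + ∫ x in m..R, (x - (a + 5 * h / 6)) * f' x|
      ≤ |∫ x in a..m, (x - (a + h / 6)) * f' x|
          + |∫ x in m..R, (x - (a + 5 * h / 6)) * f' x| := abs_add_le _ _
    _ ≤ (∫ x in a..m, |x - (a + h / 6)| ^ p) ^ (1 / p) * (∫ x in a..m, (C + D * x)) ^ (1 / q)
        + (∫ x in m..R, |x - (a + 5 * h / 6)| ^ p) ^ (1 / p)
          * (∫ x in m..R, (C + D * x)) ^ (1 / q) := add_le_add H1 H2
    _ = h * h * (K ^ (1 / p) * (3 / 8 * A + 1 / 8 * B) ^ (1 / q))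
        + h * h * (K ^ (1 / p) * (1 / 8 * A + 3 / 8 * B) ^ (1 / q)) := by
        rw [K1, KK, L1, K2, show ((h / 3) ^ (p + 1) + (h / 6) ^ (p + 1)) / (p + 1)
            = ((h / 6) ^ (p + 1) + (h / 3) ^ (p + 1)) / (p + 1) from by ring, KK, L2,
          pow_combine _ hM1, pow_combine _ hM2]
    _ = h * K ^ (1 / p) * ((3 / 8 * A + 1 / 8 * B) ^ (1 / q)
          + (1 / 8 * A + 3 / 8 * B) ^ (1 / q)) * h := by ring
end

section
/- Let a, b ∈ ℝ and let c > 0 be a real constant (representing e^{iφ} for 0 ≤ φ ≤ π/2) with a < a + c(b−a). Let f be a positive real-valued function differentiable on an open set containing [a, a + c(b−a)] with f′ integrable on [a, a + c(b−a)]. Fix q > 1 and set p = q/(q−1). Suppose |f′|^q is c-convex, i.e. |f′(a + t c (b−a))|^q ≤ (1−t)|f′(a)|^q + t|f′(b)|^q for all t ∈ [0,1]. Then |(1/6)[f(a) + 4 f(a + c(b−a)/2) + f(a + c(b−a))] − (1/(c(b−a))) ∫_a^{a+c(b−a)} f(x) dx| ≤ c(b−a) (2(1 + 2^{p+1})/(6^{p+1}(p+1)))^{1/p}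 [ (|f′(a)|^q + |f′(b)|^q)/2 ]^{1/q}. -/
open intervalIntegral MeasureTheory Set

lemma abs_rpow_integral (p s r : ℝ) (hp : 0 < p) (hs : 0 ≤ s) (hr : 0 ≤ r) :
    ∫ u in (-s)..r, |u| ^ p = (s ^ (p + 1) + r ^ (p + 1)) / (p + 1) := by
  have hcont : Continuous fun u : ℝ => |u| ^ p :=
    continuous_abs.rpow_const (fun x => Or.inr hp.le)
  have hbase : ∀ t : ℝ, 0 ≤ t → ∫ u in (0:ℝ)..t, |u| ^ p = t ^ (p + 1) / (p + 1) := by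
    intro t ht
    have : ∫ u in (0:ℝ)..t, |u| ^ p = ∫ u in (0:ℝ)..t, u ^ p := by
      apply intervalIntegral.integral_congr
      intro u hu
      rw [Set.uIcc_of_le ht] at hu
      show |u| ^ p = u ^ p
      rw [abs_of_nonneg hu.1]
    rw [this, integral_rpow (Or.inl (by linarith))]
    rw [Real.zero_rpow (by positivity)]
    ring
  have hneg : ∫ u in (-s)..(0:ℝ), |u| ^ p = s ^ (p + 1) / (p + 1) := by
    have h1 : ∫ u in (0:ℝ)..s, |(-u)| ^ p = ∫ u in (-s)..(0:ℝ), |u| ^ p := by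
      simpa using intervalIntegral.integral_comp_neg (a := 0) (b := s)
        (f := fun u : ℝ => |u| ^ p)
    rw [← h1]
    simp_rw [abs_neg]
    exact hbase s hs
  have hsplit := intervalIntegral.integral_add_adjacent_intervals
    (hcont.intervalIntegrable (μ := volume) (-s) 0) (hcont.intervalIntegrable 0 r)
  rw [← hsplit, hneg, hbase r hr]
  ring

lemma simpson_final_arith (h p q D : ℝ) (hh : 0 < h) (hp1 : 1 < p) (hq1 : 1 < q)
    (hpq : 1/p + 1/q = 1) (hD : 0 ≤ D) :
    (1/h) * ((2 * ((h/6) ^ (p+1) + (h/3) ^ (p+1)) / (p+1)) ^ (1/p) * (h * D) ^ (1/q))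
      = h * (2 * (1 + 2 ^ (p+1)) / (6 ^ (p+1) * (p+1))) ^ (1/p) * D ^ (1/q) := by
  have hp0 : (0:ℝ) < p := by linarith
  have hS : (0:ℝ) < (6:ℝ) ^ (p+1) := Real.rpow_pos_of_pos (by norm_num) _
  have hT : (0:ℝ) < (2:ℝ) ^ (p+1) := Real.rpow_pos_of_pos (by norm_num) _
  have h6 : (h/6) ^ (p+1) = h ^ (p+1) / 6 ^ (p+1) := Real.div_rpow hh.le (by norm_num) _
  have h3 : (h/3) ^ (p+1) = h ^ (p+1) * (2 ^ (p+1) / 6 ^ (p+1)) := by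
    have : (h/3 : ℝ) = h * 2 / 6 := by ring
    rw [this, Real.div_rpow (by positivity) (by norm_num) _, Real.mul_rpow hh.le (by norm_num)]
    ring
  have hinner : 2 * ((h/6) ^ (p+1) + (h/3) ^ (p+1)) / (p+1)
      = h ^ (p+1) * (2 * (1 + 2 ^ (p+1)) / (6 ^ (p+1) * (p+1))) := by
    rw [h6, h3]
    field_simp
  have hC : (0:ℝ) ≤ 2 * (1 + 2 ^ (p+1)) / (6 ^ (p+1) * (p+1)) := by positivity
  rw [hinner, Real.mul_rpow (by positivity) hC, Real.mul_rpow hh.le hD,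
    ← Real.rpow_mul hh.le]
  have hone : (1:ℝ)/h = h ^ (-1:ℝ) := by rw [Real.rpow_neg_one, one_div]
  rw [hone]
  have hcollect : h ^ (-1:ℝ) * (h ^ ((p+1) * (1/p)) *
      (2 * (1 + 2 ^ (p+1)) / (6 ^ (p+1) * (p+1))) ^ (1/p) *
      (h ^ (1/q) * D ^ (1/q)))
      = (h ^ (-1:ℝ) * h ^ ((p+1) * (1/p)) * h ^ (1/q)) *
        ((2 * (1 + 2 ^ (p+1)) / (6 ^ (p+1) * (p+1))) ^ (1/p) * D ^ (1/q)) := by ring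
  rw [hcollect, ← Real.rpow_add hh, ← Real.rpow_add hh]
  have hexp : (-1:ℝ) + (p+1) * (1/p) + 1/q = 1 := by
    have : (p+1) * (1/p) = 1 + 1/p := by field_simp
    rw [this]; linarith
  rw [hexp, Real.rpow_one]
  ring

set_option maxHeartbeats 2000000

/-- **Simpson type inequality via Hölder, second form (Theorem 3.3).** If
`|f'|^q` is `c`-convex for some `q > 1` and `p = q / (q - 1)`, then the Simpson
quadrature error on `[a, a + c * (b - a)]` is bounded by
`c * (b - a) * (2 * (1 + 2^(p+1)) / (6^(p+1) * (p+1)))^(1/p) *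
  ((|f' a|^q + |f' b|^q) / 2)^(1/q)`. -/
theorem simpson_type_phi_convex_holder' (a b c : ℝ) (hc : 0 < c)
    (hab : a < a + c * (b - a))
    (U : Set ℝ) (hU : IsOpen U) (hsub : Set.Icc a (a + c * (b - a)) ⊆ U)
    (f f' : ℝ → ℝ) (hpos : ∀ x ∈ U, 0 < f x)
    (hderiv : ∀ x ∈ U, HasDerivAt f (f' x) x)
    (hint : IntervalIntegrable f' MeasureTheory.volume a (a + c * (b - a)))
    (q p : ℝ) (hq : 1 < q) (hp : p = q / (q - 1))
    (hconv : ∀ t ∈ Set.Icc (0 : ℝ) 1,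
      |f' (a + t * c * (b - a))| ^ q ≤ (1 - t) * |f' a| ^ q + t * |f' b| ^ q) :
    |(1 / 6) * (f a + 4 * f (a + c * (b - a) / 2) + f (a + c * (b - a))) -
        (1 / (c * (b - a))) * ∫ x in a..(a + c * (b - a)), f x| ≤
      c * (b - a) * (2 * (1 + 2 ^ (p + 1)) / (6 ^ (p + 1) * (p + 1))) ^ (1 / p) *
        ((|f' a| ^ q + |f' b| ^ q) / 2) ^ (1 / q) := by
  set h : ℝ := c * (b - a) with hh_def
  have hh : 0 < h := by linarith
  have hhne : h ≠ 0 := hh.ne'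
  set B : ℝ := a + h with hB_def
  have haB : a ≤ B := by simp [hB_def]; linarith
  set m : ℝ := a + h / 2 with hm_def
  have ham : a ≤ m := by simp [hm_def]; linarith
  have hmB : m ≤ B := by simp [hm_def, hB_def]; linarith
  set α : ℝ := a + h / 6 with hα_def
  set β : ℝ := a + 5 * h / 6 with hβ_def
  set A₁ : ℝ := |f' a| ^ q with hA1_def
  set B₁ : ℝ := |f' b| ^ q with hB1_def
  have hA1 : 0 ≤ A₁ := Real.rpow_nonneg (abs_nonneg _) q
  have hB1 : 0 ≤ B₁ := Real.rpow_nonneg (abs_nonneg _) q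
  -- conjugate exponents
  have hq0 : q ≠ 0 := by positivity
  have hq1 : q - 1 ≠ 0 := by intro hcon; rw [sub_eq_zero] at hcon; exact absurd hcon.symm (ne_of_lt hq)
  have hqp : Real.HolderConjugate q p := Real.holderConjugate_iff.2 ⟨hq, by rw [hp]; field_simp; ring⟩
  have hpq : Real.HolderConjugate p q := hqp.symm
  have hp1 : 1 < p := hpq.lt
  have hp0 : 0 < p := hpq.pos
  have hsum : 1 / p + 1 / q = 1 := by
    have := hpq.inv_add_inv_eq_one; rw [one_div, one_div]; linarith
  -- continuity of f on [a, B]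
  have hfc : ContinuousOn f (Icc a B) := fun x hx =>
    (hderiv x (hsub hx)).continuousAt.continuousWithinAt
  have hfint : ∀ u v : ℝ, a ≤ u → u ≤ v → v ≤ B → IntervalIntegrable f volume u v := by
    intro u v hu huv hv
    exact ((hfc.mono (by rw [uIcc_of_le huv]; exact Icc_subset_Icc hu hv)).intervalIntegrable)
  have huIccB : Set.uIcc a B = Icc a B := uIcc_of_le haB
  have hint' : ∀ u v : ℝ, a ≤ u → u ≤ v → v ≤ B → IntervalIntegrable f' volume u v := by
    intro u v hu huv hv
    exact hint.mono_set (by rw [uIcc_of_le huv, huIccB]; exact Icc_subset_Icc hu hv)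
  -- integration by parts
  have ibp : ∀ γ u v : ℝ, a ≤ u → u ≤ v → v ≤ B →
      ∫ x in u..v, (x - γ) * f' x =
        ((v - γ) * f v - (u - γ) * f u) - ∫ x in u..v, f x := by
    intro γ u v hu huv hv
    have huv_sub : Set.uIcc u v ⊆ Set.Icc a B := by
      rw [uIcc_of_le huv]; exact Icc_subset_Icc hu hv
    have hk : IntervalIntegrable (fun x => (x - γ) * f' x) volume u v :=
      (hint' u v hu huv hv).continuousOn_mul
        (Continuous.continuousOn (continuous_sub_right _))
    have hfuv : IntervalIntegrable f volume u v := hfint u v hu huv hv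
    have key : ∫ x in u..v, (f x + (x - γ) * f' x) = (v - γ) * f v - (u - γ) * f u := by
      apply intervalIntegral.integral_eq_sub_of_hasDerivAt
      · intro x hx
        have hd := hderiv x (hsub (huv_sub hx))
        have h2 := (((hasDerivAt_id x).sub_const γ).mul hd :)
        simp only [Pi.mul_def, id, one_mul] at h2
        exact h2
      · exact hfuv.add hk
    rw [intervalIntegral.integral_add hfuv hk] at key
    linarith
  -- the two pieces
  have hI1 : ∫ x in a..m, (x - α) * f' x =
      (h / 3) * f m + (h / 6) * f a - ∫ x in a..m, f x := by
    rw [ibp α a m le_rfl ham hmB]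
    have e1 : m - α = h / 3 := by rw [hm_def, hα_def]; ring
    have e2 : a - α = -(h / 6) := by rw [hα_def]; ring
    rw [e1, e2]; ring
  have hI2 : ∫ x in m..B, (x - β) * f' x =
      (h / 6) * f B + (h / 3) * f m - ∫ x in m..B, f x := by
    rw [ibp β m B ham hmB le_rfl]
    have e1 : B - β = h / 6 := by rw [hB_def, hβ_def]; ring
    have e2 : m - β = -(h / 3) := by rw [hm_def, hβ_def]; ring
    rw [e1, e2]; ring
  have hfsplit : (∫ x in a..m, f x) + ∫ x in m..B, f x = ∫ x in a..B, f x :=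
    intervalIntegral.integral_add_adjacent_intervals
      (hfint a m le_rfl ham hmB) (hfint m B ham hmB le_rfl)
  -- the kernel
  set K : ℝ → ℝ := fun x => if x ≤ m then x - α else x - β with hK_def
  have hKmeas : Measurable K :=
    Measurable.ite (measurableSet_le measurable_id measurable_const)
      (measurable_id.sub_const α) (measurable_id.sub_const β)
  -- K agrees with the affine pieces
  have hKeq1 : Set.EqOn (fun x => (x - α) * f' x) (fun x => K x * f' x) (Set.Ioc a m) := by
    intro x hx
    simp only [hK_def, if_pos hx.2]
  have hKeq2 : Set.EqOn (fun x => (x - β) * f' x) (fun x => K x * f' x) (Set.Ioc m B) := by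
    intro x hx
    simp only [hK_def, if_neg (not_le.mpr hx.1)]
  have hk1int : IntervalIntegrable (fun x => (x - α) * f' x) volume a m :=
    (hint' a m le_rfl ham hmB).continuousOn_mul (Continuous.continuousOn (continuous_sub_right _))
  have hk2int : IntervalIntegrable (fun x => (x - β) * f' x) volume m B :=
    (hint' m B ham hmB le_rfl).continuousOn_mul (Continuous.continuousOn (continuous_sub_right _))
  have hφ1 : IntervalIntegrable (fun x => K x * f' x) volume a m := by
    rw [intervalIntegrable_iff_integrableOn_Ioc_of_le ham]
    exact (((intervalIntegrable_iff_integrableOn_Ioc_of_le ham).1 hk1int).congr_fun hKeq1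
      measurableSet_Ioc)
  have hφ2 : IntervalIntegrable (fun x => K x * f' x) volume m B := by
    rw [intervalIntegrable_iff_integrableOn_Ioc_of_le hmB]
    exact (((intervalIntegrable_iff_integrableOn_Ioc_of_le hmB).1 hk2int).congr_fun hKeq2
      measurableSet_Ioc)
  have hKint1 : ∫ x in a..m, K x * f' x = ∫ x in a..m, (x - α) * f' x := by
    rw [intervalIntegral.integral_of_le ham, intervalIntegral.integral_of_le ham]
    exact (MeasureTheory.setIntegral_congr_fun measurableSet_Ioc hKeq1).symm
  have hKint2 : ∫ x in m..B, K x * f' x = ∫ x in m..B, (x - β) * f' x := by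
    rw [intervalIntegral.integral_of_le hmB, intervalIntegral.integral_of_le hmB]
    exact (MeasureTheory.setIntegral_congr_fun measurableSet_Ioc hKeq2).symm
  have htotal : ∫ x in a..B, K x * f' x =
      (∫ x in a..m, (x - α) * f' x) + ∫ x in m..B, (x - β) * f' x := by
    rw [← hKint1, ← hKint2]
    exact (intervalIntegral.integral_add_adjacent_intervals hφ1 hφ2).symm
  -- identity
  have hiden : (1 / 6) * (f a + 4 * f m + f B) - (1 / h) * ∫ x in a..B, f x =
      (1 / h) * ∫ x in a..B, K x * f' x := by
    rw [htotal, hI1, hI2, ← hfsplit]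
    field_simp
    ring
  -- Hölder inequality setup
  set μ : Measure ℝ := volume.restrict (Set.Ioc a B) with hμ_def
  have hfinμ : IsFiniteMeasure μ := by
    constructor
    rw [hμ_def, Measure.restrict_apply_univ]
    exact measure_Ioc_lt_top
  have hKae : AEStronglyMeasurable K μ := hKmeas.aestronglyMeasurable
  have hKbdd : ∀ᵐ x ∂μ, ‖K x‖ ≤ h := by
    rw [hμ_def]
    refine (ae_restrict_iff' measurableSet_Ioc).2 (ae_of_all _ fun x hx => ?_)
    have hx1 : a < x := hx.1
    have hx2 : x ≤ B := hx.2
    have hxB : x ≤ a + h := by rwa [← hB_def]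
    rw [Real.norm_eq_abs, hK_def]
    simp only
    split_ifs with hxm
    · rw [abs_le]
      constructor
      · rw [hα_def]; linarith
      · rw [hα_def]; linarith
    · rw [abs_le]
      constructor
      · rw [hβ_def]; linarith
      · rw [hβ_def]; linarith
  have hmemK : MemLp K (ENNReal.ofReal p) μ :=
    (memLp_top_of_bound hKae h hKbdd).mono_exponent le_top
  -- f' is bounded a.e. on Ioc a B
  have hptw : ∀ x ∈ Set.Icc a B, |f' x| ^ q ≤ (1 - (x - a)/h) * A₁ + ((x - a)/h) * B₁ := by
    intro x hx
    have ht0 : 0 ≤ (x - a)/h := div_nonneg (by linarith [hx.1]) hh.le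
    have hxB : x ≤ a + h := by have := hx.2; rwa [← hB_def]
    have ht1 : (x - a)/h ≤ 1 := by
      rw [div_le_one hh]; linarith
    have harg : a + ((x - a)/h) * c * (b - a) = x := by
      have hc2 : ((x - a)/h) * c * (b - a) = ((x - a)/h) * h := by rw [hh_def]; ring
      rw [hc2]
      field_simp
      ring
    have := hconv ((x - a)/h) ⟨ht0, ht1⟩
    rwa [harg] at this
  have hf'bdd : ∀ᵐ x ∂μ, ‖f' x‖ ≤ (A₁ + B₁) ^ (1/q) := by
    rw [hμ_def]
    refine (ae_restrict_iff' measurableSet_Ioc).2 (ae_of_all _ fun x hx => ?_)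
    have hx' : x ∈ Set.Icc a B := ⟨hx.1.le, hx.2⟩
    have h1 : |f' x| ^ q ≤ A₁ + B₁ := by
      have h2 := hptw x hx'
      have ht0 : 0 ≤ (x - a)/h := div_nonneg (by linarith [hx'.1]) hh.le
      have hxB : x ≤ a + h := by have := hx'.2; rwa [← hB_def]
      have ht1 : (x - a)/h ≤ 1 := by rw [div_le_one hh]; linarith
      nlinarith
    have h3 : (|f' x| ^ q) ^ (1/q) ≤ (A₁ + B₁) ^ (1/q) :=
      Real.rpow_le_rpow (Real.rpow_nonneg (abs_nonneg _) q) h1 (by positivity)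
    rw [Real.norm_eq_abs]
    calc |f' x| = (|f' x| ^ q) ^ (1/q) := by
          rw [one_div, Real.rpow_rpow_inv (abs_nonneg _) hq0]
      _ ≤ (A₁ + B₁) ^ (1/q) := h3
  have hf'ae : AEStronglyMeasurable f' μ := by
    rw [hμ_def]
    exact hint.1.aestronglyMeasurable
  have hmemf' : MemLp f' (ENNReal.ofReal q) μ :=
    (memLp_top_of_bound hf'ae _ hf'bdd).mono_exponent le_top
  have holder := MeasureTheory.integral_mul_norm_le_Lp_mul_Lq hpq hmemK hmemf'
  -- rewrite the product integral
  have habs2 : ∫ x, ‖K x‖ * ‖f' x‖ ∂μ = ∫ x in a..B, |K x * f' x| := by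
    rw [hμ_def, intervalIntegral.integral_of_le haB]
    simp_rw [Real.norm_eq_abs, ← abs_mul]
  -- compute the kernel Lp integral
  have hcontp : Continuous fun u : ℝ => |u| ^ p :=
    continuous_abs.rpow_const (fun x => Or.inr hp0.le)
  have hKp1 : ∫ x in a..m, ‖K x‖ ^ p = ((h/6) ^ (p+1) + (h/3) ^ (p+1)) / (p+1) := by
    have e1 : ∫ x in a..m, ‖K x‖ ^ p = ∫ x in a..m, |x - α| ^ p := by
      rw [intervalIntegral.integral_of_le ham, intervalIntegral.integral_of_le ham]
      refine MeasureTheory.setIntegral_congr_fun measurableSet_Ioc fun x hx => ?_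
      simp only [hK_def, if_pos hx.2, Real.norm_eq_abs]
    have e2 : ∫ x in a..m, |x - α| ^ p = ∫ u in (a - α)..(m - α), |u| ^ p :=
      intervalIntegral.integral_comp_sub_right (fun u => |u| ^ p) α
    have e3 : a - α = -(h/6) := by rw [hα_def]; ring
    have e4 : m - α = h/3 := by rw [hm_def, hα_def]; ring
    rw [e1, e2, e3, e4, abs_rpow_integral p (h/6) (h/3) hp0 (by positivity) (by positivity)]
  have hKp2 : ∫ x in m..B, ‖K x‖ ^ p = ((h/3) ^ (p+1) + (h/6) ^ (p+1)) / (p+1) := by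
    have e1 : ∫ x in m..B, ‖K x‖ ^ p = ∫ x in m..B, |x - β| ^ p := by
      rw [intervalIntegral.integral_of_le hmB, intervalIntegral.integral_of_le hmB]
      refine MeasureTheory.setIntegral_congr_fun measurableSet_Ioc fun x hx => ?_
      simp only [hK_def, if_neg (not_le.mpr hx.1), Real.norm_eq_abs]
    have e2 : ∫ x in m..B, |x - β| ^ p = ∫ u in (m - β)..(B - β), |u| ^ p :=
      intervalIntegral.integral_comp_sub_right (fun u => |u| ^ p) β
    have e3 : m - β = -(h/3) := by rw [hm_def, hβ_def]; ring
    have e4 : B - β = h/6 := by rw [hB_def, hβ_def]; ring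
    rw [e1, e2, e3, e4, abs_rpow_integral p (h/3) (h/6) hp0 (by positivity) (by positivity)]
  have hKpint1 : IntervalIntegrable (fun x => ‖K x‖ ^ p) volume a m := by
    rw [intervalIntegrable_iff_integrableOn_Ioc_of_le ham]
    refine (((hcontp.comp (continuous_sub_right α)).intervalIntegrable (μ := volume)
      a m).1).congr_fun (fun x hx => ?_) measurableSet_Ioc
    simp only [Function.comp, hK_def, if_pos hx.2, Real.norm_eq_abs]
  have hKpint2 : IntervalIntegrable (fun x => ‖K x‖ ^ p) volume m B := by
    rw [intervalIntegrable_iff_integrableOn_Ioc_of_le hmB]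
    refine (((hcontp.comp (continuous_sub_right β)).intervalIntegrable (μ := volume)
      m B).1).congr_fun (fun x hx => ?_) measurableSet_Ioc
    simp only [Function.comp, hK_def, if_neg (not_le.mpr hx.1), Real.norm_eq_abs]
  have hKptotal : ∫ x, ‖K x‖ ^ p ∂μ = 2 * ((h/6) ^ (p+1) + (h/3) ^ (p+1)) / (p+1) := by
    have := intervalIntegral.integral_add_adjacent_intervals hKpint1 hKpint2
    have e0 : ∫ x, ‖K x‖ ^ p ∂μ = ∫ x in a..B, ‖K x‖ ^ p := by
      rw [hμ_def, intervalIntegral.integral_of_le haB]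
    rw [e0, ← this, hKp1, hKp2]
    ring
  -- bound the f' Lq integral
  have hq_pos : (0:ℝ) < q := by linarith
  have hf'q_int : Integrable (fun x => ‖f' x‖ ^ q) μ := by
    have := hmemf'.integrable_norm_rpow ((ENNReal.ofReal_pos.mpr hq_pos).ne')
      ENNReal.ofReal_ne_top
    rwa [ENNReal.toReal_ofReal hq_pos.le] at this
  have hf'q_ii : IntervalIntegrable (fun x => |f' x| ^ q) volume a B := by
    rw [intervalIntegrable_iff_integrableOn_Ioc_of_le haB]
    have : IntegrableOn (fun x => ‖f' x‖ ^ q) (Set.Ioc a B) volume := by rwa [hμ_def] at hf'q_int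
    exact this.congr_fun (fun x _ => by simp only [Real.norm_eq_abs]) measurableSet_Ioc
  have hgc : Continuous fun x : ℝ => (1 - (x - a)/h) * A₁ + ((x - a)/h) * B₁ :=
    ((continuous_const.sub ((continuous_id.sub continuous_const).div_const h)).mul
      continuous_const).add
      (((continuous_id.sub continuous_const).div_const h).mul continuous_const)
  have hgint : ∫ x in a..B, ((1 - (x - a)/h) * A₁ + ((x - a)/h) * B₁) = h * ((A₁ + B₁) / 2) := by
    have hrw : (fun x : ℝ => (1 - (x - a)/h) * A₁ + ((x - a)/h) * B₁)
        = fun x : ℝ => (A₁ + a * A₁ / h - a * B₁ / h) + ((B₁ - A₁)/h) * x := by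
      funext x; field_simp; ring
    rw [hrw, intervalIntegral.integral_add (intervalIntegrable_const)
      ((by fun_prop : Continuous fun x : ℝ => (B₁ - A₁)/h * x).intervalIntegrable a B),
      intervalIntegral.integral_const, intervalIntegral.integral_const_mul,
      integral_id, smul_eq_mul, hB_def]
    field_simp
    ring
  have hf'q_bound : ∫ x, ‖f' x‖ ^ q ∂μ ≤ h * ((A₁ + B₁) / 2) := by
    have e0 : ∫ x, ‖f' x‖ ^ q ∂μ = ∫ x in a..B, |f' x| ^ q := by
      rw [hμ_def, intervalIntegral.integral_of_le haB]
      simp_rw [Real.norm_eq_abs]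
    rw [e0, ← hgint]
    exact intervalIntegral.integral_mono_on haB hf'q_ii (hgc.intervalIntegrable a B) hptw
  -- assemble
  rw [hiden, abs_mul, abs_of_pos (by positivity : (0:ℝ) < 1/h)]
  calc (1/h) * |∫ x in a..B, K x * f' x|
      ≤ (1/h) * ((2 * ((h/6) ^ (p+1) + (h/3) ^ (p+1)) / (p+1)) ^ (1/p) *
          (h * ((A₁ + B₁) / 2)) ^ (1/q)) := by
        apply mul_le_mul_of_nonneg_left _ (by positivity)
        calc |∫ x in a..B, K x * f' x| ≤ ∫ x in a..B, |K x * f' x| :=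
              intervalIntegral.abs_integral_le_integral_abs haB
          _ = ∫ x, ‖K x‖ * ‖f' x‖ ∂μ := habs2.symm
          _ ≤ (∫ x, ‖K x‖ ^ p ∂μ) ^ (1/p) * (∫ x, ‖f' x‖ ^ q ∂μ) ^ (1/q) := holder
          _ ≤ (2 * ((h/6) ^ (p+1) + (h/3) ^ (p+1)) / (p+1)) ^ (1/p) *
              (h * ((A₁ + B₁) / 2)) ^ (1/q) := by
            rw [hKptotal]
            refine mul_le_mul_of_nonneg_left ?_ (by positivity)
            exact Real.rpow_le_rpow (MeasureTheory.integral_nonneg fun x => by positivity)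
              hf'q_bound (by positivity)
    _ = h * (2 * (1 + 2 ^ (p + 1)) / (6 ^ (p + 1) * (p + 1))) ^ (1 / p) *
          ((A₁ + B₁) / 2) ^ (1 / q) :=
        simpson_final_arith h p q ((A₁ + B₁) / 2) hh hp1 hq hsum (by positivity)
end

section
/- Let a, b ∈ ℝ and let c > 0 be a real constant (representing e^{iφ} for 0 ≤ φ ≤ π/2) with a < a + c(b−a). Let f be a positive real-valued function differentiable on an open set containing [a, a + c(b−a)] with f′ integrable on [a, a + c(b−a)]. Fix q ≥ 1 and suppose |f′|^q is c-convex, i.e. |f′(a + t c (b−a))|^q ≤ (1−t)|f′(a)|^q + t|f′(b)|^q for all t ∈ [0,1]. Then |(1/6)[f(a) + 4 f(a + c(b−a)/2) + f(a + c(b−a))] − (1/(c(b−a))) ∫_a^{a+c(b−a)} f(x) dx| ≤ c(b−a) (5/72)^{1 − 1/q} { ((61|f′(a)|^q + 29|f′(b)|^q)/1296)^{1/q} + ((29|f′(a)|^q + 61|f′(b)|^q)/1296)^{1/q} }. -/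
open MeasureTheory intervalIntegral Set

lemma poly_int (u v α β γ : ℝ) :
    (∫ t in u..v, (α + β * t + γ * t ^ 2)) =
      α*(v-u) + β*(v^2-u^2)/2 + γ*(v^3-u^3)/3 := by
  have h1 : IntervalIntegrable (fun t : ℝ => α + β * t) volume u v :=
    (Continuous.intervalIntegrable (by fun_prop) _ _)
  have h2 : IntervalIntegrable (fun t : ℝ => γ * t ^ 2) volume u v :=
    (Continuous.intervalIntegrable (by fun_prop) _ _)
  have hc : IntervalIntegrable (fun _ : ℝ => α) volume u v :=
    intervalIntegrable_const
  have hl : IntervalIntegrable (fun t : ℝ => β * t) volume u v :=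
    (Continuous.intervalIntegrable (by fun_prop) _ _)
  rw [intervalIntegral.integral_add h1 h2, intervalIntegral.integral_add hc hl,
    intervalIntegral.integral_const_mul, intervalIntegral.integral_const_mul,
    integral_id, integral_pow, intervalIntegral.integral_const]
  simp only [smul_eq_mul]
  push_cast
  ring

lemma J1_int (A B : ℝ) : (∫ t in (0:ℝ)..(1/2), |t - 1/6| * ((1-t)*A + t*B)) =
    (61*A + 29*B)/1296 := by
  have hcont : Continuous fun t : ℝ => |t - 1/6| * ((1-t)*A + t*B) := by fun_prop
  have h1 : (∫ t in (0:ℝ)..(1/6), |t - 1/6| * ((1-t)*A + t*B)) =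
      ∫ t in (0:ℝ)..(1/6), (A/6 + (-(7/6)*A + B/6) * t + (A - B) * t^2) := by
    apply intervalIntegral.integral_congr
    intro t ht
    dsimp only
    rw [Set.uIcc_of_le (by norm_num)] at ht
    rw [abs_of_nonpos (by linarith [ht.2])]
    ring
  have h2 : (∫ t in (1/6:ℝ)..(1/2), |t - 1/6| * ((1-t)*A + t*B)) =
      ∫ t in (1/6:ℝ)..(1/2), (-(A/6) + ((7/6)*A - B/6) * t + (-A + B) * t^2) := by
    apply intervalIntegral.integral_congr
    intro t ht
    dsimp only
    rw [Set.uIcc_of_le (by norm_num)] at ht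
    rw [abs_of_nonneg (by linarith [ht.1])]
    ring
  rw [← intervalIntegral.integral_add_adjacent_intervals
    (hcont.intervalIntegrable 0 (1/6)) (hcont.intervalIntegrable (1/6) (1/2)),
    h1, h2, poly_int, poly_int]
  norm_num
  ring

lemma J2_int (A B : ℝ) : (∫ t in (1/2:ℝ)..1, |t - 5/6| * ((1-t)*A + t*B)) =
    (29*A + 61*B)/1296 := by
  have hcont : Continuous fun t : ℝ => |t - 5/6| * ((1-t)*A + t*B) := by fun_prop
  have h1 : (∫ t in (1/2:ℝ)..(5/6), |t - 5/6| * ((1-t)*A + t*B)) =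
      ∫ t in (1/2:ℝ)..(5/6), (5*A/6 + (-(11/6)*A + (5/6)*B) * t + (A - B) * t^2) := by
    apply intervalIntegral.integral_congr
    intro t ht
    dsimp only
    rw [Set.uIcc_of_le (by norm_num)] at ht
    rw [abs_of_nonpos (by linarith [ht.2])]
    ring
  have h2 : (∫ t in (5/6:ℝ)..1, |t - 5/6| * ((1-t)*A + t*B)) =
      ∫ t in (5/6:ℝ)..1, (-(5*A/6) + ((11/6)*A - (5/6)*B) * t + (-A + B) * t^2) := by
    apply intervalIntegral.integral_congr
    intro t ht
    dsimp only
    rw [Set.uIcc_of_le (by norm_num)] at ht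
    rw [abs_of_nonneg (by linarith [ht.1])]
    ring
  rw [← intervalIntegral.integral_add_adjacent_intervals
    (hcont.intervalIntegrable (1/2) (5/6)) (hcont.intervalIntegrable (5/6) 1),
    h1, h2, poly_int, poly_int]
  norm_num
  ring

lemma W1_int : (∫ t in (0:ℝ)..(1/2), |t - 1/6|) = 5/72 := by
  have : (∫ t in (0:ℝ)..(1/2), |t - 1/6|) =
      ∫ t in (0:ℝ)..(1/2), |t - 1/6| * ((1-t)*1 + t*1) := by
    apply intervalIntegral.integral_congr; intro t ht; dsimp only; ring
  rw [this, J1_int]; norm_num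

lemma W2_int : (∫ t in (1/2:ℝ)..1, |t - 5/6|) = 5/72 := by
  have : (∫ t in (1/2:ℝ)..1, |t - 5/6|) =
      ∫ t in (1/2:ℝ)..1, |t - 5/6| * ((1-t)*1 + t*1) := by
    apply intervalIntegral.integral_congr; intro t ht; dsimp only; ring
  rw [this, J2_int]; norm_num

lemma holder_step (μ : Measure ℝ) [IsFiniteMeasure μ] (w g : ℝ → ℝ)
    (hw : Continuous w) (hwn : ∀ t, 0 ≤ w t)
    (hg : AEStronglyMeasurable g μ)
    (Mw M : ℝ) (hMw0 : 0 ≤ Mw) (hM0 : 0 ≤ M)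
    (hMw : ∀ᵐ t ∂μ, w t ≤ Mw) (hM : ∀ᵐ t ∂μ, |g t| ≤ M)
    (q : ℝ) (hq : 1 ≤ q) :
    (∫ t, w t * |g t| ∂μ) ≤
      (∫ t, w t ∂μ) ^ (1 - 1/q) * (∫ t, w t * |g t| ^ q ∂μ) ^ (1/q) := by
  rcases eq_or_lt_of_le hq with hq1 | hq1
  · subst hq1
    simp only [Real.rpow_one, one_div, inv_one, sub_self, Real.rpow_zero, one_mul]
    exact le_rfl
  · set p := Real.conjExponent q with hp
    have hpq : p.HolderConjugate q := (Real.HolderConjugate.conjExponent hq1).symm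
    have hp0 : 0 < p := hpq.pos
    have hq0 : 0 < q := hpq.symm.pos
    have hinv : 1/p = 1 - 1/q := by
      have := hpq.inv_add_inv_eq_one
      rw [one_div, one_div]; linarith
    have hsum : 1/p + 1/q = 1 := by rw [hinv]; ring
    set F : ℝ → ℝ := fun t => w t ^ (1/p) with hF
    set G : ℝ → ℝ := fun t => w t ^ (1/q) * |g t| with hG
    have hFG : ∀ t, F t * G t = w t * |g t| := by
      intro t
      have : w t ^ (1/p) * w t ^ (1/q) = w t := by
        rw [← Real.rpow_add' (hwn t) (by rw [hsum]; exact one_ne_zero), hsum, Real.rpow_one]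
      simp only [hF, hG]; rw [← mul_assoc, this]
    have hFp : ∀ t, F t ^ p = w t := by
      intro t
      simp only [hF]
      rw [← Real.rpow_mul (hwn t), one_div_mul_cancel hp0.ne', Real.rpow_one]
    have hGq : ∀ t, G t ^ q = w t * |g t| ^ q := by
      intro t
      simp only [hG]
      rw [Real.mul_rpow (Real.rpow_nonneg (hwn t) _) (abs_nonneg _),
        ← Real.rpow_mul (hwn t), one_div_mul_cancel hq0.ne', Real.rpow_one]
    have hFc : Continuous F := hw.rpow_const (fun x => Or.inr (by positivity))
    have habs : AEStronglyMeasurable (fun t => |g t|) μ := by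
      simpa [Real.norm_eq_abs] using hg.norm
    have hGm : AEStronglyMeasurable G μ :=
      ((hw.rpow_const (fun x => Or.inr (one_div_nonneg.mpr hq0.le))).aestronglyMeasurable).mul habs
    have hMF : MemLp F (ENNReal.ofReal p) μ := by
      apply MemLp.of_bound hFc.aestronglyMeasurable (Mw ^ (1/p))
      filter_upwards [hMw] with t ht
      rw [Real.norm_of_nonneg (Real.rpow_nonneg (hwn t) _)]
      exact Real.rpow_le_rpow (hwn t) ht (by positivity)
    have hMG : MemLp G (ENNReal.ofReal q) μ := by
      apply MemLp.of_bound hGm (Mw ^ (1/q) * M)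
      filter_upwards [hMw, hM] with t ht hgt
      rw [Real.norm_of_nonneg (mul_nonneg (Real.rpow_nonneg (hwn t) _) (abs_nonneg _))]
      exact mul_le_mul (Real.rpow_le_rpow (hwn t) ht (by positivity)) hgt
        (abs_nonneg _) (Real.rpow_nonneg hMw0 _)
    have hFn : 0 ≤ᵐ[μ] F := ae_of_all _ fun t => Real.rpow_nonneg (hwn t) _
    have hGn : 0 ≤ᵐ[μ] G := ae_of_all _ fun t =>
      mul_nonneg (Real.rpow_nonneg (hwn t) _) (abs_nonneg _)
    calc (∫ t, w t * |g t| ∂μ) = ∫ t, F t * G t ∂μ := by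
          exact integral_congr_ae (ae_of_all _ fun t => (hFG t).symm)
      _ ≤ (∫ t, F t ^ p ∂μ) ^ (1/p) * (∫ t, G t ^ q ∂μ) ^ (1/q) :=
          integral_mul_le_Lp_mul_Lq_of_nonneg hpq hFn hGn hMF hMG
      _ = (∫ t, w t ∂μ) ^ (1 - 1/q) * (∫ t, w t * |g t| ^ q ∂μ) ^ (1/q) := by
          rw [hinv]
          congr 1
          · congr 1; exact integral_congr_ae (ae_of_all _ fun t => hFp t)
          · congr 1; exact integral_congr_ae (ae_of_all _ fun t => hGq t)

lemma half_est (u v : ℝ) (huv : u < v) (hu0 : 0 ≤ u) (hv1 : v ≤ 1)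
    (w h : ℝ → ℝ) (hw : Continuous w) (hwn : ∀ t, 0 ≤ w t)
    (hwb : ∀ t ∈ Ioc u v, w t ≤ 1)
    (hmeas : AEStronglyMeasurable h (volume.restrict (Ioc u v)))
    (A B q : ℝ) (hA : 0 ≤ A) (hB : 0 ≤ B) (hq : 1 ≤ q)
    (hbound : ∀ t ∈ Ioc u v, |h t| ^ q ≤ (1-t)*A + t*B)
    (Wv Jv : ℝ) (hWv : 0 ≤ Wv) (hJv : 0 ≤ Jv)
    (hW : (∫ t in u..v, w t) = Wv)
    (hJ : (∫ t in u..v, w t * ((1-t)*A + t*B)) = Jv) :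
    (∫ t in u..v, w t * |h t|) ≤ Wv ^ (1 - 1/q) * Jv ^ (1/q) := by
  have hq0 : 0 < q := lt_of_lt_of_le one_pos hq
  set μ := volume.restrict (Ioc u v) with hμ
  haveI : IsFiniteMeasure μ := ⟨by
    rw [Measure.restrict_apply_univ]; exact measure_Ioc_lt_top⟩
  -- bound for |h| on Ioc
  have habs : ∀ t ∈ Ioc u v, |h t| ≤ (A + B) ^ (1/q) := by
    intro t ht
    have h1 : |h t| ^ q ≤ A + B := by
      refine (hbound t ht).trans ?_
      have ht0 : 0 ≤ t := hu0.trans ht.1.le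
      have ht1 : t ≤ 1 := ht.2.trans hv1
      nlinarith
    calc |h t| = (|h t| ^ q) ^ (1/q) := by
          rw [← Real.rpow_mul (abs_nonneg _), mul_one_div_cancel hq0.ne', Real.rpow_one]
      _ ≤ (A + B) ^ (1/q) := Real.rpow_le_rpow (Real.rpow_nonneg (abs_nonneg _) _) h1 (by positivity)
  -- pass to set integrals
  rw [intervalIntegral.integral_of_le huv.le]
  have key := holder_step μ w h hw hwn hmeas
    1 ((A+B)^(1/q)) zero_le_one (by positivity) ?_ ?_ q hq
  · refine key.trans ?_
    have hWeq : (∫ t, w t ∂μ) = Wv := by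
      rw [← hW, intervalIntegral.integral_of_le huv.le]
    rw [hWeq]
    gcongr
    · exact integral_nonneg fun t => mul_nonneg (hwn t) (Real.rpow_nonneg (abs_nonneg _) _)
    · -- ∫ w * |h|^q ≤ Jv
      rw [← hJ, intervalIntegral.integral_of_le huv.le]
      apply integral_mono_of_nonneg
      · exact ae_of_all _ fun t => mul_nonneg (hwn t) (Real.rpow_nonneg (abs_nonneg _) _)
      · exact (hw.mul (by fun_prop)).integrableOn_Ioc
      · rw [Filter.EventuallyLE, ae_restrict_iff' measurableSet_Ioc]
        exact ae_of_all _ fun t ht => mul_le_mul_of_nonneg_left (hbound t ht) (hwn t)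
  · rw [ae_restrict_iff' measurableSet_Ioc]
    exact ae_of_all _ hwb
  · rw [ae_restrict_iff' measurableSet_Ioc]
    exact ae_of_all _ habs


lemma simpson_aux (a L : ℝ) (hL : 0 < L)
    (U : Set ℝ) (hsub : Set.Icc a (a + L) ⊆ U)
    (f f' : ℝ → ℝ) (hderiv : ∀ x ∈ U, HasDerivAt f (f' x) x)
    (hint : IntervalIntegrable f' volume a (a + L))
    (q : ℝ) (hq : 1 ≤ q) (A B : ℝ) (hA : 0 ≤ A) (hB : 0 ≤ B)
    (hconv : ∀ t ∈ Set.Icc (0 : ℝ) 1, |f' (a + t * L)| ^ q ≤ (1 - t) * A + t * B) :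
    |(1 / 6) * (f a + 4 * f (a + L / 2) + f (a + L)) -
        (1 / L) * ∫ x in a..(a + L), f x| ≤
      L * (5 / 72) ^ (1 - 1 / q) *
        (((61 * A + 29 * B) / 1296) ^ (1 / q) +
          ((29 * A + 61 * B) / 1296) ^ (1 / q)) := by
  have hmemU : ∀ t ∈ Icc (0:ℝ) 1, a + t * L ∈ U := by
    intro t ht
    refine hsub ⟨?_, ?_⟩ <;> nlinarith [ht.1, ht.2]
  have hgd : ∀ t ∈ Icc (0:ℝ) 1,
      HasDerivAt (fun s => f (a + s * L)) (f' (a + t * L) * L) t := by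
    intro t ht
    have h0 : HasDerivAt (fun s : ℝ => a + s * L) L t := by
      simpa using ((hasDerivAt_id t).mul_const L).const_add a
    exact
      (HasDerivAt.comp t (hderiv _ (hmemU t ht)) h0)
  have hint2 : IntervalIntegrable (fun t => f' (a + t * L)) volume 0 1 := by
    have h1 : IntervalIntegrable (fun x => f' (a + x)) volume 0 L := by
      simpa using hint.comp_add_left a
    have h2 := h1.comp_mul_left (c := L)
    rw [zero_div, div_self hL.ne'] at h2
    simpa [mul_comm] using h2
  have hint3 : IntervalIntegrable (fun t => f' (a + t * L) * L) volume 0 1 :=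
    hint2.mul_const L
  have hsub1 : Set.uIcc (0:ℝ) (1/2) ⊆ Set.uIcc (0:ℝ) 1 := by
    rw [Set.uIcc_of_le (by norm_num : (0:ℝ) ≤ 1/2), Set.uIcc_of_le (by norm_num : (0:ℝ) ≤ 1)]
    exact Icc_subset_Icc le_rfl (by norm_num)
  have hsub2 : Set.uIcc (1/2:ℝ) 1 ⊆ Set.uIcc (0:ℝ) 1 := by
    rw [Set.uIcc_of_le (by norm_num : (1/2:ℝ) ≤ 1), Set.uIcc_of_le (by norm_num : (0:ℝ) ≤ 1)]
    exact Icc_subset_Icc (by norm_num) le_rfl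
  have hicc : Set.uIcc (0:ℝ) 1 = Icc 0 1 := Set.uIcc_of_le (by norm_num)
  have ibp1 := intervalIntegral.integral_mul_deriv_eq_deriv_mul
    (a := 0) (b := 1/2) (u := fun t => t - 1/6) (u' := fun _ => (1:ℝ))
    (v := fun s => f (a + s * L)) (v' := fun t => f' (a + t * L) * L)
    (fun x _ => by simpa using (hasDerivAt_id x).sub_const (1/6))
    (fun x hx => hgd x (hicc ▸ hsub1 hx))
    intervalIntegrable_const (hint3.mono_set hsub1)
  have ibp2 := intervalIntegral.integral_mul_deriv_eq_deriv_mul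
    (a := 1/2) (b := 1) (u := fun t => t - 5/6) (u' := fun _ => (1:ℝ))
    (v := fun s => f (a + s * L)) (v' := fun t => f' (a + t * L) * L)
    (fun x _ => by simpa using (hasDerivAt_id x).sub_const (5/6))
    (fun x hx => hgd x (hicc ▸ hsub2 hx))
    intervalIntegrable_const (hint3.mono_set hsub2)
  try simp only at ibp1 ibp2
  have hsubint : (∫ t in (0:ℝ)..1, f (a + t * L)) = L⁻¹ * ∫ x in a..(a+L), f x := by
    have h := intervalIntegral.integral_comp_add_mul (f := f) (a := 0) (b := 1) hL.ne' a
    simp only [mul_zero, add_zero, mul_one, smul_eq_mul] at h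
    rw [← h]
    apply intervalIntegral.integral_congr
    intro t _; dsimp only; rw [mul_comm]
  have hgc : ∀ u v : ℝ, Set.uIcc u v ⊆ Set.uIcc (0:ℝ) 1 →
      IntervalIntegrable (fun s => f (a + s * L)) volume u v := by
    intro u v huv
    apply ContinuousOn.intervalIntegrable
    exact fun t ht => ((hgd t (hicc ▸ huv ht)).continuousAt).continuousWithinAt
  have hsplit : (∫ t in (0:ℝ)..(1/2), f (a + t * L)) + (∫ t in (1/2:ℝ)..1, f (a + t * L)) =
      ∫ t in (0:ℝ)..1, f (a + t * L) :=
    intervalIntegral.integral_add_adjacent_intervals (hgc 0 (1/2) hsub1) (hgc (1/2) 1 hsub2)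
  have key : (1/6) * (f a + 4 * f (a + L/2) + f (a + L)) - (1/L) * ∫ x in a..(a+L), f x
      = (∫ t in (0:ℝ)..(1/2), (t - 1/6) * (f' (a + t * L) * L)) +
        ∫ t in (1/2:ℝ)..1, (t - 5/6) * (f' (a + t * L) * L) := by
    rw [ibp1, ibp2]
    simp only [one_mul]
    have e0 : a + (0:ℝ) * L = a := by ring
    have eh : a + (1/2:ℝ) * L = a + L / 2 := by ring
    have e1 : a + (1:ℝ) * L = a + L := by ring
    rw [e0, eh, one_div L, ← hsubint, ← hsplit]
    ring
  have hmeasgen : ∀ u v : ℝ, 0 ≤ u → v ≤ 1 →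
      AEStronglyMeasurable (fun t => f' (a + t * L)) (volume.restrict (Ioc u v)) := by
    intro u v hu hv
    have hm : AEStronglyMeasurable (fun t => deriv f (a + t * L))
        (volume.restrict (Ioc u v)) :=
      ((measurable_deriv f).comp (by measurability)).aestronglyMeasurable
    apply hm.congr
    rw [Filter.EventuallyEq, ae_restrict_iff' measurableSet_Ioc]
    refine ae_of_all _ fun t ht => ?_
    exact (hderiv _ (hmemU t ⟨hu.trans ht.1.le, ht.2.trans hv⟩)).deriv
  have hboundgen : ∀ u v : ℝ, 0 ≤ u → v ≤ 1 → ∀ t ∈ Ioc u v,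
      |f' (a + t * L)| ^ q ≤ (1 - t) * A + t * B := by
    intro u v hu hv t ht
    exact hconv t ⟨hu.trans ht.1.le, ht.2.trans hv⟩
  have est1 : (∫ t in (0:ℝ)..(1/2), |t - 1/6| * |f' (a + t * L)|) ≤
      (5/72) ^ (1 - 1/q) * ((61*A + 29*B)/1296) ^ (1/q) := by
    apply half_est 0 (1/2) (by norm_num) le_rfl (by norm_num)
      (fun t => |t - 1/6|) (fun t => f' (a + t * L)) (by fun_prop) (fun t => abs_nonneg _)
      (fun t ht => abs_le.2 ⟨by linarith [ht.1], by linarith [ht.2]⟩)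
      (hmeasgen 0 (1/2) le_rfl (by norm_num))
      A B q hA hB hq (hboundgen 0 (1/2) le_rfl (by norm_num))
      (5/72) ((61*A + 29*B)/1296) (by norm_num) (by positivity) W1_int (J1_int A B)
  have est2 : (∫ t in (1/2:ℝ)..1, |t - 5/6| * |f' (a + t * L)|) ≤
      (5/72) ^ (1 - 1/q) * ((29*A + 61*B)/1296) ^ (1/q) := by
    apply half_est (1/2) 1 (by norm_num) (by norm_num) le_rfl
      (fun t => |t - 5/6|) (fun t => f' (a + t * L)) (by fun_prop) (fun t => abs_nonneg _)
      (fun t ht => abs_le.2 ⟨by linarith [ht.1], by linarith [ht.2]⟩)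
      (hmeasgen (1/2) 1 (by norm_num) le_rfl)
      A B q hA hB hq (hboundgen (1/2) 1 (by norm_num) le_rfl)
      (5/72) ((29*A + 61*B)/1296) (by norm_num) (by positivity) W2_int (J2_int A B)
  have habs1 : |∫ t in (0:ℝ)..(1/2), (t - 1/6) * (f' (a + t * L) * L)| ≤
      L * ∫ t in (0:ℝ)..(1/2), |t - 1/6| * |f' (a + t * L)| := by
    calc |∫ t in (0:ℝ)..(1/2), (t - 1/6) * (f' (a + t * L) * L)|
        ≤ ∫ t in (0:ℝ)..(1/2), |(t - 1/6) * (f' (a + t * L) * L)| :=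
          intervalIntegral.abs_integral_le_integral_abs (by norm_num)
      _ = ∫ t in (0:ℝ)..(1/2), (|t - 1/6| * |f' (a + t * L)|) * L := by
          apply intervalIntegral.integral_congr
          intro t _; dsimp only
          rw [abs_mul, abs_mul, abs_of_pos hL]; ring
      _ = L * ∫ t in (0:ℝ)..(1/2), |t - 1/6| * |f' (a + t * L)| := by
          rw [intervalIntegral.integral_mul_const]; ring
  have habs2 : |∫ t in (1/2:ℝ)..1, (t - 5/6) * (f' (a + t * L) * L)| ≤
      L * ∫ t in (1/2:ℝ)..1, |t - 5/6| * |f' (a + t * L)| := by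
    calc |∫ t in (1/2:ℝ)..1, (t - 5/6) * (f' (a + t * L) * L)|
        ≤ ∫ t in (1/2:ℝ)..1, |(t - 5/6) * (f' (a + t * L) * L)| :=
          intervalIntegral.abs_integral_le_integral_abs (by norm_num)
      _ = ∫ t in (1/2:ℝ)..1, (|t - 5/6| * |f' (a + t * L)|) * L := by
          apply intervalIntegral.integral_congr
          intro t _; dsimp only
          rw [abs_mul, abs_mul, abs_of_pos hL]; ring
      _ = L * ∫ t in (1/2:ℝ)..1, |t - 5/6| * |f' (a + t * L)| := by
          rw [intervalIntegral.integral_mul_const]; ring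
  rw [key]
  calc |(∫ t in (0:ℝ)..(1/2), (t - 1/6) * (f' (a + t * L) * L)) +
        ∫ t in (1/2:ℝ)..1, (t - 5/6) * (f' (a + t * L) * L)|
      ≤ |∫ t in (0:ℝ)..(1/2), (t - 1/6) * (f' (a + t * L) * L)| +
        |∫ t in (1/2:ℝ)..1, (t - 5/6) * (f' (a + t * L) * L)| := abs_add_le _ _
    _ ≤ (L * ∫ t in (0:ℝ)..(1/2), |t - 1/6| * |f' (a + t * L)|) +
        (L * ∫ t in (1/2:ℝ)..1, |t - 5/6| * |f' (a + t * L)|) := add_le_add habs1 habs2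
    _ ≤ L * ((5/72) ^ (1 - 1/q) * ((61*A + 29*B)/1296) ^ (1/q)) +
        L * ((5/72) ^ (1 - 1/q) * ((29*A + 61*B)/1296) ^ (1/q)) :=
        add_le_add (mul_le_mul_of_nonneg_left est1 hL.le)
          (mul_le_mul_of_nonneg_left est2 hL.le)
    _ = L * (5/72) ^ (1 - 1/q) *
        (((61*A + 29*B)/1296) ^ (1/q) + ((29*A + 61*B)/1296) ^ (1/q)) := by ring

/-- **Simpson type inequality via the power-mean inequality (Theorem 3.4).**
If `|f'|^q` is `c`-convex for some `q ≥ 1`, then the Simpson quadrature error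
on `[a, a + c * (b - a)]` is bounded by
`c * (b - a) * (5/72)^(1 - 1/q) *
  (((61 * |f' a|^q + 29 * |f' b|^q) / 1296)^(1/q) +
    ((29 * |f' a|^q + 61 * |f' b|^q) / 1296)^(1/q))`. -/
theorem simpson_type_phi_convex_power_mean (a b c : ℝ) (hc : 0 < c)
    (hab : a < a + c * (b - a))
    (U : Set ℝ) (hU : IsOpen U) (hsub : Set.Icc a (a + c * (b - a)) ⊆ U)
    (f f' : ℝ → ℝ) (hpos : ∀ x ∈ U, 0 < f x)
    (hderiv : ∀ x ∈ U, HasDerivAt f (f' x) x)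
    (hint : IntervalIntegrable f' MeasureTheory.volume a (a + c * (b - a)))
    (q : ℝ) (hq : 1 ≤ q)
    (hconv : ∀ t ∈ Set.Icc (0 : ℝ) 1,
      |f' (a + t * c * (b - a))| ^ q ≤ (1 - t) * |f' a| ^ q + t * |f' b| ^ q) :
    |(1 / 6) * (f a + 4 * f (a + c * (b - a) / 2) + f (a + c * (b - a))) -
        (1 / (c * (b - a))) * ∫ x in a..(a + c * (b - a)), f x| ≤
      c * (b - a) * (5 / 72) ^ (1 - 1 / q) *
        (((61 * |f' a| ^ q + 29 * |f' b| ^ q) / 1296) ^ (1 / q) +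
          ((29 * |f' a| ^ q + 61 * |f' b| ^ q) / 1296) ^ (1 / q)) := by
  have hL : 0 < c * (b - a) := by linarith
  exact simpson_aux a (c * (b - a)) hL U hsub f f' hderiv hint q hq
    (|f' a| ^ q) (|f' b| ^ q)
    (Real.rpow_nonneg (abs_nonneg _) _) (Real.rpow_nonneg (abs_nonneg _) _)
    (fun t ht => by
      have h1 : a + t * (c * (b - a)) = a + t * c * (b - a) := by ring
      rw [h1]; exact hconv t ht)
end
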